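/- arXiv:2309.13284 — 5 statements merged into one kernel-verified Lean document; each statement's English description precedes it below -/
import Mathlib

section
/- Let m ≥ 2 be a positive integer and R = R_1 × ⋯ × R_m, where each R_i is a commutative Artinian local principal ideal ring that is not a field. Then the maximum cardinality of a set S of non-trivial ideals of R such that no two distinct members of S are mutually maximally distant in G(R) equals 2^{m-1}; that is, the independence number of the strong resolving graph satisfies β(G(R)_SR) = 2^{m-1}. -/
open SimpleGraph

/-- The type of non-trivial ideals of a commutative ring `R`
(ideals `I` with `I ≠ 0` and `I ≠ R`). -/
abbrev NontrivialIdeal (R : Type*) [CommRing R] : Type _ :=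
  {I : Ideal R // I ≠ ⊥ ∧ I ≠ ⊤}

/-- The intersection graph of ideals of `R`: vertices are the non-trivial ideals,
and distinct vertices are adjacent iff their intersection is non-zero. -/
def intersectionGraph (R : Type*) [CommRing R] : SimpleGraph (NontrivialIdeal R) where
  Adj I J := I ≠ J ∧ I.1 ⊓ J.1 ≠ ⊥
  symm := ⟨fun I J h => ⟨h.1.symm, by rw [inf_comm]; exact h.2⟩⟩
  loopless := ⟨fun I h => h.1 rfl⟩

/-- Two distinct vertices `u, v` are mutually maximally distant if
`d(v,w) ≤ d(u,v)` for every neighbour `w` of `u` and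
`d(u,w) ≤ d(u,v)` for every neighbour `w` of `v`. -/
def MutuallyMaximallyDistant {V : Type*} (G : SimpleGraph V) (u v : V) : Prop :=
  u ≠ v ∧ (∀ w, G.Adj u w → G.edist v w ≤ G.edist u v) ∧
    (∀ w, G.Adj v w → G.edist u w ≤ G.edist u v)

theorem MutuallyMaximallyDistant.symm {V : Type*} {G : SimpleGraph V} {u v : V}
    (h : MutuallyMaximallyDistant G u v) : MutuallyMaximallyDistant G v u :=
  ⟨h.1.symm,
    fun w hw => by rw [show G.edist v u = G.edist u v from G.edist_comm]; exact h.2.2 w hw,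
    fun w hw => by rw [show G.edist v u = G.edist u v from G.edist_comm]; exact h.2.1 w hw⟩

/-- The strong resolving graph of `G`: `u` and `v` are adjacent iff they are
mutually maximally distant. -/
def strongResolvingGraph {V : Type*} (G : SimpleGraph V) : SimpleGraph V where
  Adj := MutuallyMaximallyDistant G
  symm := ⟨fun _ _ h => h.symm⟩
  loopless := ⟨fun _ h => h.1 rfl⟩

/-- A vertex `w` strongly resolves `u` and `v` if `d(w,u) = d(w,v) + d(v,u)` or
`d(w,v) = d(w,u) + d(u,v)`. A set `W` is a strong resolving set if every two distinct
vertices are strongly resolved by some member of `W`. -/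
def IsStrongResolvingSet {V : Type*} (G : SimpleGraph V) (W : Set V) : Prop :=
  ∀ u v : V, u ≠ v → ∃ w ∈ W,
    G.edist w u = G.edist w v + G.edist v u ∨ G.edist w v = G.edist w u + G.edist u v

/-- The product ideal which is `Rᵢ` in the components where `I` is zero and `0` elsewhere. -/
def complIdeal {ι : Type*} (F : ι → Type*) [∀ i, CommRing (F i)] (I : Ideal (∀ i, F i)) :
    Ideal (∀ i, F i) where
  carrier := {x | ∀ i, I.map (Pi.evalRingHom F i) ≠ ⊥ → x i = 0}
  zero_mem' := fun i _ => rfl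
  add_mem' := fun hx hy i hi => by
    simp only [Pi.add_apply, hx i hi, hy i hi, add_zero]
  smul_mem' := fun c x hx i hi => by
    simp only [Pi.smul_apply, smul_eq_mul, Pi.mul_apply, hx i hi, mul_zero]

/-! ### Auxiliary lemmas -/

theorem IG.two_le_enat {x : ℕ∞} (h0 : x ≠ 0) (h1 : x ≠ 1) : 2 ≤ x := by
  have h : (1 : ℕ∞) < x := lt_of_le_of_ne (ENat.one_le_iff_ne_zero.mpr h0) (Ne.symm h1)
  rw [← one_add_one_eq_two]
  exact (ENat.add_one_le_iff (by simp)).mpr h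

/-- Every Artinian local principal ideal ring which is not a field has a nonzero element
contained in every nonzero ideal. -/
theorem IG.exists_socle (A : Type*) [CommRing A] [IsArtinianRing A] [IsLocalRing A]
    [IsPrincipalIdealRing A] :
    ∃ s : A, s ≠ 0 ∧ ∀ I : Ideal A, I ≠ ⊥ → s ∈ I := by
  classical
  obtain ⟨t, ht⟩ := Submodule.IsPrincipal.principal (IsLocalRing.maximalIdeal A)
  have htm : t ∈ IsLocalRing.maximalIdeal A := by
    rw [ht]; exact Ideal.subset_span rfl
  have hnil : ∃ n, t ^ n = 0 := by
    obtain ⟨n, hn⟩ := IsArtinianRing.isNilpotent_jacobson_bot (R := A)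
    rw [IsLocalRing.jacobson_eq_maximalIdeal ⊥ bot_ne_top] at hn
    refine ⟨n, ?_⟩
    have : t ^ n ∈ (IsLocalRing.maximalIdeal A) ^ n := Ideal.pow_mem_pow htm n
    rw [hn] at this
    exact (Submodule.mem_bot A).mp this
  set n := Nat.find hnil with hn_def
  have hn0 : t ^ n = 0 := Nat.find_spec hnil
  have npos : 0 < n := by
    rcases Nat.eq_zero_or_pos n with h | h
    · exfalso; rw [h, pow_zero] at hn0; exact one_ne_zero hn0
    · exact h
  have hs0 : t ^ (n - 1) ≠ 0 := Nat.find_min hnil (by omega)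
  refine ⟨t ^ (n - 1), hs0, fun I hI => ?_⟩
  obtain ⟨x, hxI, hx0⟩ := Submodule.ne_bot_iff I |>.mp hI
  have hQ : ∃ j, x ∉ Ideal.span {t ^ (j + 1)} := by
    refine ⟨n - 1, ?_⟩
    rw [show n - 1 + 1 = n by omega, hn0]
    rw [Ideal.span_singleton_eq_bot.mpr rfl]
    simpa using hx0
  set k := Nat.find hQ with hk_def
  have hk : x ∉ Ideal.span {t ^ (k + 1)} := Nat.find_spec hQ
  have hmem : x ∈ Ideal.span {t ^ k} := by
    rcases Nat.eq_zero_or_pos k with h | h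
    · rw [h, pow_zero, Ideal.span_singleton_one]; trivial
    · have := Nat.find_min hQ (show k - 1 < k by omega)
      rw [not_not] at this
      rwa [show k - 1 + 1 = k by omega] at this
  obtain ⟨c, hc⟩ := Ideal.mem_span_singleton'.mp hmem
  have hcu : IsUnit c := by
    by_contra hc'
    have hcm : c ∈ IsLocalRing.maximalIdeal A := hc'
    rw [ht] at hcm
    obtain ⟨d, hd⟩ := Ideal.mem_span_singleton'.mp hcm
    refine hk (Ideal.mem_span_singleton'.mpr ⟨d, ?_⟩)
    rw [pow_succ, ← mul_assoc, ← hc, ← hd]; ring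
  have htk : t ^ k ∈ I := by
    have h1 : (↑hcu.unit⁻¹ : A) * x ∈ I := I.mul_mem_left _ hxI
    rw [← hc, ← mul_assoc, IsUnit.val_inv_mul, one_mul] at h1
    exact h1
  have hkn : k < n := by
    by_contra h
    push_neg at h
    have h2 : t ^ k = 0 := by
      have h3 : t ^ k = t ^ n * t ^ (k - n) := by rw [← pow_add]; congr 1; omega
      rw [h3, hn0, zero_mul]
    rw [h2, mul_zero] at hc
    exact hx0 hc.symm
  have h4 : t ^ (n - 1) = t ^ (n - 1 - k) * t ^ k := by rw [← pow_add]; congr 1; omega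
  rw [h4]
  exact I.mul_mem_left _ htk

section Prod
variable {m : ℕ} {R : Fin m → Type*} [∀ i, CommRing (R i)]

theorem IG.eval_surj (i : Fin m) : Function.Surjective (Pi.evalRingHom R i) :=
  fun y => ⟨Pi.single i y, Pi.single_eq_same i y⟩

theorem IG.single_mul (i : Fin m) (x : ∀ i, R i) :
    Pi.single i (1 : R i) * x = Pi.single i (x i) := by
  funext j
  by_cases h : j = i
  · subst h; simp [Pi.mul_apply]
  · simp [Pi.mul_apply, Pi.single_eq_of_ne h]

theorem IG.single_mem {I : Ideal (∀ i, R i)} {i : Fin m} {y : R i}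
    (hy : y ∈ I.map (Pi.evalRingHom R i)) : Pi.single i y ∈ I := by
  obtain ⟨x, hxI, hx⟩ := (Ideal.mem_map_iff_of_surjective _ (IG.eval_surj i)).mp hy
  have := I.mul_mem_left (Pi.single i 1) hxI
  rwa [IG.single_mul, show x i = y from hx] at this

theorem IG.map_ne_bot_iff {I : Ideal (∀ i, R i)} {i : Fin m} :
    I.map (Pi.evalRingHom R i) ≠ ⊥ ↔ ∃ x ∈ I, x i ≠ 0 := by
  constructor
  · intro h
    obtain ⟨y, hy, hy0⟩ := Submodule.ne_bot_iff _ |>.mp h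
    obtain ⟨x, hxI, hx⟩ := (Ideal.mem_map_iff_of_surjective _ (IG.eval_surj i)).mp hy
    exact ⟨x, hxI, by rw [show x i = y from hx]; exact hy0⟩
  · rintro ⟨x, hxI, hx⟩ h
    have : x i ∈ I.map (Pi.evalRingHom R i) := Ideal.mem_map_of_mem _ hxI
    rw [h] at this
    exact hx ((Submodule.mem_bot _).mp this)

/-- The product ideal `∏ J i`. -/
def IG.piIdeal (J : ∀ i, Ideal (R i)) : Ideal (∀ i, R i) where
  carrier := {x | ∀ i, x i ∈ J i}
  zero_mem' := fun i => (J i).zero_mem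
  add_mem' := fun hx hy i => (J i).add_mem (hx i) (hy i)
  smul_mem' := fun c x hx i => by simpa using (J i).mul_mem_left (c i) (hx i)

theorem IG.mem_piIdeal {J : ∀ i, Ideal (R i)} {x : ∀ i, R i} :
    x ∈ IG.piIdeal J ↔ ∀ i, x i ∈ J i := Iff.rfl

theorem IG.single_mem_piIdeal {J : ∀ i, Ideal (R i)} {i : Fin m} {y : R i} (hy : y ∈ J i) :
    Pi.single i y ∈ IG.piIdeal J := by
  intro j
  by_cases h : j = i
  · subst h; simpa using hy
  · rw [Pi.single_eq_of_ne h]; exact (J j).zero_mem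

theorem IG.map_piIdeal (J : ∀ i, Ideal (R i)) (i : Fin m) :
    (IG.piIdeal J).map (Pi.evalRingHom R i) = J i := by
  apply le_antisymm
  · rw [Ideal.map_le_iff_le_comap]
    intro x hx
    exact hx i
  · intro y hy
    have : (Pi.evalRingHom R i) (Pi.single i y) ∈ (IG.piIdeal J).map (Pi.evalRingHom R i) :=
      Ideal.mem_map_of_mem _ (IG.single_mem_piIdeal hy)
    rwa [Pi.evalRingHom_apply, Pi.single_eq_same] at this

/-- Support of a vertex is nonempty. -/
theorem IG.supp_nonempty (u : NontrivialIdeal (∀ i, R i)) :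
    ∃ i, u.1.map (Pi.evalRingHom R i) ≠ ⊥ := by
  obtain ⟨x, hxI, hx0⟩ := Submodule.ne_bot_iff _ |>.mp u.2.1
  obtain ⟨i, hi⟩ := Function.ne_iff.mp hx0
  exact ⟨i, IG.map_ne_bot_iff.mpr ⟨x, hxI, hi⟩⟩

variable (hs : ∀ i, ∃ s : R i, s ≠ 0 ∧ ∀ I : Ideal (R i), I ≠ ⊥ → s ∈ I)

include hs in
theorem IG.adj_iff {u v : NontrivialIdeal (∀ i, R i)} :
    (intersectionGraph (∀ i, R i)).Adj u v ↔ u ≠ v ∧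
      ∃ i, u.1.map (Pi.evalRingHom R i) ≠ ⊥ ∧ v.1.map (Pi.evalRingHom R i) ≠ ⊥ := by
  constructor
  · rintro ⟨hne, hinf⟩
    refine ⟨hne, ?_⟩
    obtain ⟨x, hx, hx0⟩ := Submodule.ne_bot_iff _ |>.mp hinf
    obtain ⟨i, hi⟩ := Function.ne_iff.mp hx0
    exact ⟨i, IG.map_ne_bot_iff.mpr ⟨x, hx.1, hi⟩, IG.map_ne_bot_iff.mpr ⟨x, hx.2, hi⟩⟩
  · rintro ⟨hne, i, hu, hv⟩
    refine ⟨hne, ?_⟩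
    obtain ⟨s, hs0, hsmem⟩ := hs i
    have h1 : Pi.single i s ∈ u.1 := IG.single_mem (hsmem _ hu)
    have h2 : Pi.single i s ∈ v.1 := IG.single_mem (hsmem _ hv)
    refine Submodule.ne_bot_iff _ |>.mpr ⟨Pi.single i s, ⟨h1, h2⟩, ?_⟩
    intro h
    exact hs0 (by rw [← Pi.single_eq_same i s, h]; rfl)

variable [∀ i, IsLocalRing (R i)]
variable (hmne : ∀ i, IsLocalRing.maximalIdeal (R i) ≠ ⊥)

include hs hmne in
theorem IG.exists_big (hm1 : 0 < m) :
    ∃ Mv : NontrivialIdeal (∀ i, R i), ∀ i, Mv.1.map (Pi.evalRingHom R i) ≠ ⊥ := by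
  set J : ∀ i, Ideal (R i) := fun i => IsLocalRing.maximalIdeal (R i)
  have hmap : ∀ i, (IG.piIdeal J).map (Pi.evalRingHom R i) = J i := IG.map_piIdeal J
  set i0 : Fin m := ⟨0, hm1⟩
  obtain ⟨s, hs0, hsmem⟩ := hs i0
  refine ⟨⟨IG.piIdeal J, ?_, ?_⟩, fun i => by rw [hmap i]; exact hmne i⟩
  · refine Submodule.ne_bot_iff _ |>.mpr ⟨Pi.single i0 s, IG.single_mem_piIdeal (hsmem _ (hmne i0)), ?_⟩
    intro h
    exact hs0 (by rw [← Pi.single_eq_same i0 s, h]; rfl)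
  · intro h
    have h1 : (1 : ∀ i, R i) ∈ IG.piIdeal J := h ▸ Submodule.mem_top
    have := h1 i0
    exact (IsLocalRing.maximalIdeal.isMaximal (R i0)).ne_top ((Ideal.eq_top_iff_one _).mpr this)

include hs hmne in
theorem IG.edist_le_two (hm1 : 0 < m) (u v : NontrivialIdeal (∀ i, R i)) (huv : u ≠ v) :
    (intersectionGraph (∀ i, R i)).edist u v ≤ 2 := by
  obtain ⟨Mv, hMv⟩ := IG.exists_big hs hmne hm1
  set G := intersectionGraph (∀ i, R i)
  have hadjM : ∀ w : NontrivialIdeal (∀ i, R i), w ≠ Mv → G.Adj w Mv := by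
    intro w hw
    obtain ⟨i, hi⟩ := IG.supp_nonempty w
    exact (IG.adj_iff hs).mpr ⟨hw, i, hi, hMv i⟩
  by_cases hu : u = Mv
  · subst hu
    have := (hadjM v (by exact fun h => huv h.symm)).symm
    rw [← edist_eq_one_iff_adj] at this
    rw [this]; norm_num
  by_cases hv : v = Mv
  · subst hv
    have := hadjM u huv
    rw [← edist_eq_one_iff_adj] at this
    rw [this]; norm_num
  calc G.edist u v ≤ G.edist u Mv + G.edist Mv v := G.edist_triangle
    _ ≤ 1 + 1 := by
        gcongr
        · exact le_of_eq (edist_eq_one_iff_adj.mpr (hadjM u hu))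
        · exact le_of_eq (edist_eq_one_iff_adj.mpr ((hadjM v hv).symm))
    _ = 2 := one_add_one_eq_two

include hs hmne in
theorem IG.mmd_of_disjoint (hm1 : 0 < m) {u v : NontrivialIdeal (∀ i, R i)} (huv : u ≠ v)
    (hdisj : ∀ i, ¬(u.1.map (Pi.evalRingHom R i) ≠ ⊥ ∧ v.1.map (Pi.evalRingHom R i) ≠ ⊥)) :
    MutuallyMaximallyDistant (intersectionGraph (∀ i, R i)) u v := by
  set G := intersectionGraph (∀ i, R i)
  have hnadj : ¬ G.Adj u v := by
    intro hA
    obtain ⟨_, i, h1, h2⟩ := (IG.adj_iff hs).mp hA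
    exact hdisj i ⟨h1, h2⟩
  have h2le : 2 ≤ G.edist u v :=
    IG.two_le_enat (fun h => huv (SimpleGraph.edist_eq_zero_iff.mp h))
      (fun h => hnadj (edist_eq_one_iff_adj.mp h))
  refine ⟨huv, fun w hw => ?_, fun w hw => ?_⟩
  · have hwv : w ≠ v := fun h => hnadj (h ▸ hw)
    exact (IG.edist_le_two hs hmne hm1 v w (Ne.symm hwv)).trans h2le
  · have hwu : w ≠ u := fun h => hnadj ((h ▸ hw).symm)
    exact (IG.edist_le_two hs hmne hm1 u w (Ne.symm hwu)).trans h2le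

include hs in
theorem IG.mmd_of_supp_eq {u v : NontrivialIdeal (∀ i, R i)} (huv : u ≠ v)
    (heq : ∀ i, u.1.map (Pi.evalRingHom R i) ≠ ⊥ ↔ v.1.map (Pi.evalRingHom R i) ≠ ⊥) :
    MutuallyMaximallyDistant (intersectionGraph (∀ i, R i)) u v := by
  set G := intersectionGraph (∀ i, R i)
  have hadj : G.Adj u v := by
    obtain ⟨i, hi⟩ := IG.supp_nonempty u
    exact (IG.adj_iff hs).mpr ⟨huv, i, hi, (heq i).mp hi⟩
  have h1 : G.edist u v = 1 := edist_eq_one_iff_adj.mpr hadj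
  refine ⟨huv, fun w hw => ?_, fun w hw => ?_⟩
  · by_cases hwv : w = v
    · subst hwv; simp [h1]
    · obtain ⟨_, i, hui, hwi⟩ := (IG.adj_iff hs).mp hw
      have : G.Adj v w := (IG.adj_iff hs).mpr ⟨Ne.symm hwv, i, (heq i).mp hui, hwi⟩
      rw [h1, edist_eq_one_iff_adj.mpr this]
  · by_cases hwu : w = u
    · subst hwu; simp [h1]
    · obtain ⟨_, i, hvi, hwi⟩ := (IG.adj_iff hs).mp hw
      have : G.Adj u w := (IG.adj_iff hs).mpr ⟨Ne.symm hwu, i, (heq i).mpr hvi, hwi⟩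
      rw [h1, edist_eq_one_iff_adj.mpr this]

include hs hmne in
theorem IG.supp_subset_of_mmd (hm2 : 2 ≤ m) {u v : NontrivialIdeal (∀ i, R i)}
    (h : MutuallyMaximallyDistant (intersectionGraph (∀ i, R i)) u v)
    (hc : ∃ i, u.1.map (Pi.evalRingHom R i) ≠ ⊥ ∧ v.1.map (Pi.evalRingHom R i) ≠ ⊥)
    {j : Fin m} (hju : u.1.map (Pi.evalRingHom R j) ≠ ⊥) :
    v.1.map (Pi.evalRingHom R j) ≠ ⊥ := by
  classical
  intro hjv
  set G := intersectionGraph (∀ i, R i)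
  have hadj : G.Adj u v := (IG.adj_iff hs).mpr ⟨h.1, hc⟩
  have h1 : G.edist u v = 1 := edist_eq_one_iff_adj.mpr hadj
  obtain ⟨s, hs0, hsmem⟩ := hs j
  -- two candidate vertices supported exactly at j
  set JE : ∀ i, Ideal (R i) := fun k => if k = j then ⊤ else ⊥ with hJE
  set JF : ∀ i, Ideal (R i) := fun k => if k = j then IsLocalRing.maximalIdeal (R k) else ⊥ with hJF
  have hnt : Nontrivial (Fin m) := Fin.nontrivial_iff_two_le.mpr hm2
  obtain ⟨k0, hk0⟩ := exists_ne j
  have hsingle_ne : ∀ y : R j, y ≠ 0 → Pi.single j y ≠ 0 := by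
    intro y hy h
    exact hy (by rw [← Pi.single_eq_same j y, h]; rfl)
  have hEbot : IG.piIdeal JE ≠ ⊥ := by
    refine Submodule.ne_bot_iff _ |>.mpr ⟨Pi.single j s, IG.single_mem_piIdeal ?_, hsingle_ne s hs0⟩
    simp [hJE]
  have hEtop : IG.piIdeal JE ≠ ⊤ := by
    intro h'
    have h1' : (1 : ∀ i, R i) ∈ IG.piIdeal JE := h' ▸ Submodule.mem_top
    have := h1' k0
    rw [hJE] at this
    simp only [if_neg hk0] at this
    exact one_ne_zero ((Submodule.mem_bot _).mp this)
  have hFbot : IG.piIdeal JF ≠ ⊥ := by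
    refine Submodule.ne_bot_iff _ |>.mpr ⟨Pi.single j s, IG.single_mem_piIdeal ?_, hsingle_ne s hs0⟩
    simp only [hJF, if_pos rfl]
    exact hsmem _ (hmne j)
  have hFtop : IG.piIdeal JF ≠ ⊤ := by
    intro h'
    have h1' : (1 : ∀ i, R i) ∈ IG.piIdeal JF := h' ▸ Submodule.mem_top
    have := h1' k0
    rw [hJF] at this
    simp only [if_neg hk0] at this
    exact one_ne_zero ((Submodule.mem_bot _).mp this)
  set wE : NontrivialIdeal (∀ i, R i) := ⟨IG.piIdeal JE, hEbot, hEtop⟩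
  set wF : NontrivialIdeal (∀ i, R i) := ⟨IG.piIdeal JF, hFbot, hFtop⟩
  have hEF : wE ≠ wF := by
    intro h'
    have h'' : IG.piIdeal JE = IG.piIdeal JF := congrArg Subtype.val h'
    have hm1 : Pi.single j (1 : R j) ∈ IG.piIdeal JE := IG.single_mem_piIdeal (by simp [hJE])
    rw [h''] at hm1
    have := hm1 j
    rw [Pi.single_eq_same, hJF] at this
    simp only [if_pos rfl] at this
    exact (IsLocalRing.maximalIdeal.isMaximal (R j)).ne_top ((Ideal.eq_top_iff_one _).mpr this)
  have hwprop : ∀ w : NontrivialIdeal (∀ i, R i), (w = wE ∨ w = wF) →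
      w.1.map (Pi.evalRingHom R j) ≠ ⊥ ∧ ∀ k, k ≠ j → w.1.map (Pi.evalRingHom R k) = ⊥ := by
    rintro w (rfl | rfl)
    · constructor
      · rw [IG.map_piIdeal, hJE]
        show (if j = j then (⊤ : Ideal (R j)) else ⊥) ≠ ⊥
        rw [if_pos rfl]
        intro h'
        exact one_ne_zero ((Submodule.mem_bot (R j)).mp (h' ▸ (Submodule.mem_top (x := (1 : R j)))))
      · intro k hk
        rw [IG.map_piIdeal, hJE]
        simp [if_neg hk]
    · constructor
      · rw [IG.map_piIdeal, hJF]
        show (if j = j then IsLocalRing.maximalIdeal (R j) else ⊥) ≠ ⊥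
        rw [if_pos rfl]
        exact hmne j
      · intro k hk
        rw [IG.map_piIdeal, hJF]
        simp [if_neg hk]
  obtain ⟨w, hwor, hwu⟩ : ∃ w : NontrivialIdeal (∀ i, R i), (w = wE ∨ w = wF) ∧ w ≠ u := by
    by_cases h' : wE = u
    · exact ⟨wF, Or.inr rfl, fun h'' => hEF (h'.trans h''.symm)⟩
    · exact ⟨wE, Or.inl rfl, h'⟩
  obtain ⟨hwj, hwk⟩ := hwprop w hwor
  have hadjw : G.Adj u w := (IG.adj_iff hs).mpr ⟨Ne.symm hwu, j, hju, hwj⟩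
  have hle : G.edist v w ≤ 1 := h1 ▸ h.2.1 w hadjw
  have hwv : w ≠ v := by
    intro h'
    exact (h' ▸ hwj) hjv
  have hne0 : G.edist v w ≠ 0 := fun h' => hwv (SimpleGraph.edist_eq_zero_iff.mp h').symm
  have : G.edist v w = 1 := le_antisymm hle (ENat.one_le_iff_ne_zero.mpr hne0)
  have hadjvw : G.Adj v w := edist_eq_one_iff_adj.mp this
  obtain ⟨_, i, hvi, hwi⟩ := (IG.adj_iff hs).mp hadjvw
  by_cases hij : i = j
  · exact (hij ▸ hvi) hjv
  · exact hwi (hwk i hij)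

end Prod

theorem IG.card_filter_mem (m : ℕ) (hm : 1 ≤ m) (i0 : Fin m) :
    (Finset.univ.filter (fun A : Finset (Fin m) => i0 ∈ A)).card = 2 ^ (m - 1) := by
  classical
  set c1 := (Finset.univ.filter (fun A : Finset (Fin m) => i0 ∈ A)).card with hc1
  set c2 := (Finset.univ.filter (fun A : Finset (Fin m) => ¬ i0 ∈ A)).card with hc2
  have hsum : c1 + c2 = 2 ^ m := by
    rw [hc1, hc2, Finset.card_filter_add_card_filter_not, Finset.card_univ,
      Fintype.card_finset, Fintype.card_fin]
  have heq : c1 = c2 := by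
    refine Finset.card_bij' (fun A _ => A.erase i0) (fun B _ => insert i0 B) ?_ ?_ ?_ ?_
    · intro A hA
      simp only [Finset.mem_filter, Finset.mem_univ, true_and] at *
      exact Finset.notMem_erase i0 A
    · intro B hB
      simp only [Finset.mem_filter, Finset.mem_univ, true_and] at *
      exact Finset.mem_insert_self i0 B
    · intro A hA
      simp only [Finset.mem_filter, Finset.mem_univ, true_and] at hA
      exact Finset.insert_erase hA
    · intro B hB
      simp only [Finset.mem_filter, Finset.mem_univ, true_and] at hB
      exact Finset.erase_insert hB
  have hpow : 2 ^ m = 2 * 2 ^ (m - 1) := by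
    rw [← pow_succ']
    congr 1
    omega
  omega

theorem statement12 (m : ℕ) (hm : 2 ≤ m) (R : Fin m → Type*) [∀ i, CommRing (R i)]
    [∀ i, IsArtinianRing (R i)] [∀ i, IsLocalRing (R i)] [∀ i, IsPrincipalIdealRing (R i)]
    (hnf : ∀ i, ¬ IsField (R i)) :
    IsGreatest {k : ℕ | ∃ S : Set (NontrivialIdeal (∀ i, R i)), S.Finite ∧
        (∀ I ∈ S, ∀ J ∈ S, I ≠ J →
          ¬ MutuallyMaximallyDistant (intersectionGraph (∀ i, R i)) I J) ∧
        S.ncard = k} (2 ^ (m - 1)) := by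
  classical
  have hs : ∀ i, ∃ s : R i, s ≠ 0 ∧ ∀ I : Ideal (R i), I ≠ ⊥ → s ∈ I :=
    fun i => IG.exists_socle (R i)
  have hmne : ∀ i, IsLocalRing.maximalIdeal (R i) ≠ ⊥ :=
    fun i h => hnf i (IsLocalRing.isField_iff_maximalIdeal_eq.mpr h)
  have hm1 : 0 < m := by omega
  set i0 : Fin m := ⟨0, hm1⟩
  constructor
  · -- membership : construct an independent set of size 2^(m-1)
    set J : Finset (Fin m) → ∀ i, Ideal (R i) :=
      fun A i => if i ∈ A then IsLocalRing.maximalIdeal (R i) else ⊥ with hJ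
    have hmapJ : ∀ (A : Finset (Fin m)) (i : Fin m),
        (IG.piIdeal (J A)).map (Pi.evalRingHom R i) ≠ ⊥ ↔ i ∈ A := by
      intro A i
      rw [IG.map_piIdeal, hJ]
      by_cases h : i ∈ A
      · simp only [if_pos h]
        exact ⟨fun _ => h, fun _ => hmne i⟩
      · simp [if_neg h, h]
    have hnontriv : ∀ A : Finset (Fin m), i0 ∈ A → IG.piIdeal (J A) ≠ ⊥ ∧ IG.piIdeal (J A) ≠ ⊤ := by
      intro A hA
      obtain ⟨s, hs0, hsmem⟩ := hs i0
      constructor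
      · refine Submodule.ne_bot_iff _ |>.mpr ⟨Pi.single i0 s, IG.single_mem_piIdeal ?_, ?_⟩
        · rw [hJ]; simp only [if_pos hA]; exact hsmem _ (hmne i0)
        · intro h; exact hs0 (by rw [← Pi.single_eq_same i0 s, h]; rfl)
      · intro h
        have h1 : (1 : ∀ i, R i) ∈ IG.piIdeal (J A) := h ▸ Submodule.mem_top
        have := h1 i0
        rw [hJ] at this
        simp only [if_pos hA] at this
        exact (IsLocalRing.maximalIdeal.isMaximal (R i0)).ne_top ((Ideal.eq_top_iff_one _).mpr this)
    set T : Finset (Finset (Fin m)) := Finset.univ.filter (fun A => i0 ∈ A) with hT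
    set g : Finset (Fin m) → NontrivialIdeal (∀ i, R i) := fun A =>
      ⟨IG.piIdeal (J (insert i0 A)), (hnontriv _ (Finset.mem_insert_self i0 A)).1,
        (hnontriv _ (Finset.mem_insert_self i0 A)).2⟩ with hg
    have hgsupp : ∀ A : Finset (Fin m), ∀ i,
        ((g A).1.map (Pi.evalRingHom R i) ≠ ⊥) ↔ i ∈ insert i0 A := fun A i => hmapJ _ i
    have hginj : Set.InjOn g T := by
      intro A hA B hB hAB
      rw [hT, Finset.coe_filter] at hA hB
      simp only [Set.mem_setOf_eq] at hA hB
      have h1 : insert i0 A = A := Finset.insert_eq_self.mpr hA.2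
      have h2 : insert i0 B = B := Finset.insert_eq_self.mpr hB.2
      ext i
      rw [← h1, ← h2, ← hgsupp A i, ← hgsupp B i, hAB]
    refine ⟨↑(T.image g), Finset.finite_toSet _, ?_, ?_⟩
    · intro u hu v hv huv hmmd
      simp only [Finset.coe_image, Set.mem_image, Finset.mem_coe] at hu hv
      obtain ⟨A, hA, rfl⟩ := hu
      obtain ⟨B, hB, rfl⟩ := hv
      rw [hT, Finset.mem_filter] at hA hB
      have h1 : insert i0 A = A := Finset.insert_eq_self.mpr hA.2
      have h2 : insert i0 B = B := Finset.insert_eq_self.mpr hB.2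
      have hcom : ∃ i, (g A).1.map (Pi.evalRingHom R i) ≠ ⊥ ∧ (g B).1.map (Pi.evalRingHom R i) ≠ ⊥ :=
        ⟨i0, (hgsupp A i0).mpr (Finset.mem_insert_self i0 A),
          (hgsupp B i0).mpr (Finset.mem_insert_self i0 B)⟩
    -- supports are equal, so A = B, so g A = g B, contradiction
      have hAeB : A = B := by
        ext i
        constructor
        · intro hi
          have := IG.supp_subset_of_mmd hs hmne hm hmmd hcom
            ((hgsupp A i).mpr (h1.symm ▸ hi))
          rw [hgsupp B i, h2] at this
          exact this
        · intro hi
          have hcom' : ∃ i, (g B).1.map (Pi.evalRingHom R i) ≠ ⊥ ∧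
              (g A).1.map (Pi.evalRingHom R i) ≠ ⊥ :=
            ⟨i0, (hgsupp B i0).mpr (Finset.mem_insert_self i0 B),
              (hgsupp A i0).mpr (Finset.mem_insert_self i0 A)⟩
          have := IG.supp_subset_of_mmd hs hmne hm hmmd.symm hcom'
            ((hgsupp B i).mpr (h2.symm ▸ hi))
          rw [hgsupp A i, h1] at this
          exact this
      exact huv (by rw [hAeB])
    · rw [Set.ncard_coe_finset, Finset.card_image_of_injOn hginj]
      exact IG.card_filter_mem m (by omega) i0
  · -- upper bound
    rintro k ⟨S, hfin, hnom, rfl⟩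
    set sf : NontrivialIdeal (∀ i, R i) → Finset (Fin m) :=
      fun u => Finset.univ.filter (fun i => u.1.map (Pi.evalRingHom R i) ≠ ⊥) with hsf
    have hsf_mem : ∀ u i, i ∈ sf u ↔ u.1.map (Pi.evalRingHom R i) ≠ ⊥ := by
      intro u i; rw [hsf]; simp
    have hsf_inj : Set.InjOn sf S := by
      intro u hu v hv huv
      by_contra hne
      refine hnom u hu v hv hne (IG.mmd_of_supp_eq hs hne fun i => ?_)
      rw [← hsf_mem u i, ← hsf_mem v i, huv]
    set F : Finset (Finset (Fin m)) := hfin.toFinset.image sf with hF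
    have hFcard : F.card = S.ncard := by
      rw [hF, Finset.card_image_of_injOn (by rwa [Set.Finite.coe_toFinset]),
        Set.ncard_eq_toFinset_card S hfin]
    have hint : (↑F : Set (Finset (Fin m))).Intersecting := by
      intro A hA B hB
      simp only [hF, Finset.coe_image, Set.mem_image, Finset.mem_coe,
        Set.Finite.mem_toFinset] at hA hB
      obtain ⟨u, hu, rfl⟩ := hA
      obtain ⟨v, hv, rfl⟩ := hB
      by_cases huv : u = v
      · subst huv
        obtain ⟨i, hi⟩ := IG.supp_nonempty u
        exact Finset.not_disjoint_iff.mpr ⟨i, (hsf_mem u i).mpr hi, (hsf_mem u i).mpr hi⟩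
      · have hnm := hnom u hu v hv huv
        have : ¬ ∀ i, ¬(u.1.map (Pi.evalRingHom R i) ≠ ⊥ ∧ v.1.map (Pi.evalRingHom R i) ≠ ⊥) :=
          fun h => hnm (IG.mmd_of_disjoint hs hmne hm1 huv h)
        push_neg at this
        obtain ⟨i, hi⟩ := this
        exact Finset.not_disjoint_iff.mpr ⟨i, (hsf_mem u i).mpr hi.1, (hsf_mem v i).mpr hi.2⟩
    have hcle : 2 * F.card ≤ Fintype.card (Finset (Fin m)) := hint.card_le
    rw [Fintype.card_finset, Fintype.card_fin] at hcle
    have hpow : 2 ^ m = 2 * 2 ^ (m - 1) := by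
      rw [← pow_succ']
      congr 1
      omega
    omega
end

section
/- Let m ≥ 2 be a positive integer and R = R_1 × ⋯ × R_m, where each R_i is a commutative Artinian local principal ideal ring that is not a field with exactly n_i non-trivial ideals. Then the strong metric dimension of G(R) equals ∏_{i=1}^m (n_i + 2) − 2^{m-1} − 2; that is, the minimum cardinality of a strong resolving set of G(R) is ∏_{i=1}^m (n_i + 2) − 2^{m-1} − 2. -/
open SimpleGraph

namespace Aux13

section PiIdeal
variable {m : ℕ} {R : Fin m → Type*} [∀ i, CommRing (R i)]

def toPi (I : Ideal (∀ i, R i)) : ∀ i, Ideal (R i) := fun i => I.map (Pi.evalRingHom R i)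

def ofPi (J : ∀ i, Ideal (R i)) : Ideal (∀ i, R i) := ⨅ i, (J i).comap (Pi.evalRingHom R i)

lemma mem_ofPi {J : ∀ i, Ideal (R i)} {x : ∀ i, R i} : x ∈ ofPi J ↔ ∀ i, x i ∈ J i := by
  simp [ofPi, Ideal.mem_comap]

lemma mem_toPi {I : Ideal (∀ i, R i)} {i : Fin m} {a : R i} :
    a ∈ toPi I i ↔ ∃ y ∈ I, y i = a := by
  rw [toPi, Ideal.mem_map_iff_of_surjective _ (Function.surjective_eval i)]
  exact Iff.rfl

lemma single_eq_mul (i : Fin m) (y : ∀ i, R i) :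
    Pi.single i (y i) = Pi.single i (1 : R i) * y := by
  funext j
  by_cases h : j = i
  · subst h; simp
  · simp [Pi.single_eq_of_ne h]

lemma single_mem {I : Ideal (∀ i, R i)} {i : Fin m} {a : R i} (ha : a ∈ toPi I i) :
    Pi.single i a ∈ I := by
  obtain ⟨y, hy, rfl⟩ := mem_toPi.mp ha
  rw [single_eq_mul]
  exact I.mul_mem_left _ hy

lemma mem_iff_toPi {I : Ideal (∀ i, R i)} {x : ∀ i, R i} : x ∈ I ↔ ∀ i, x i ∈ toPi I i := by
  constructor
  · exact fun hx i => mem_toPi.mpr ⟨x, hx, rfl⟩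
  · intro h
    rw [← Finset.univ_sum_single x]
    exact Ideal.sum_mem I fun i _ => single_mem (h i)

lemma ofPi_toPi (I : Ideal (∀ i, R i)) : ofPi (toPi I) = I := by
  ext x; rw [mem_ofPi, mem_iff_toPi]

lemma toPi_ofPi (J : ∀ i, Ideal (R i)) : toPi (ofPi J) = J := by
  funext i
  ext a
  rw [mem_toPi]
  constructor
  · rintro ⟨y, hy, rfl⟩; exact mem_ofPi.mp hy i
  · intro ha
    refine ⟨Pi.single i a, mem_ofPi.mpr fun j => ?_, by simp⟩
    by_cases h : j = i
    · subst h; simpa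
    · simp [Pi.single_eq_of_ne h]

lemma toPi_inf (I I' : Ideal (∀ i, R i)) : toPi (I ⊓ I') = toPi I ⊓ toPi I' := by
  funext i
  refine le_antisymm (le_inf (Ideal.map_mono inf_le_left) (Ideal.map_mono inf_le_right)) ?_
  intro a ⟨ha, ha'⟩
  exact mem_toPi.mpr ⟨Pi.single i a, ⟨single_mem ha, single_mem ha'⟩, by simp⟩

lemma eq_bot_iff_toPi {I : Ideal (∀ i, R i)} : I = ⊥ ↔ ∀ i, toPi I i = ⊥ := by
  constructor
  · rintro rfl i; simp [toPi, Ideal.map_bot]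
  · intro h
    rw [eq_bot_iff]
    intro x hx
    have : ∀ i, x i = 0 := fun i => by
      have := mem_iff_toPi.mp hx i; rw [h i] at this; simpa using this
    simpa [Ideal.mem_bot] using (funext this : x = 0)

lemma eq_top_iff_toPi {I : Ideal (∀ i, R i)} : I = ⊤ ↔ ∀ i, toPi I i = ⊤ := by
  constructor
  · rintro rfl i; simp [toPi, Ideal.map_top]
  · intro h
    rw [Ideal.eq_top_iff_one, mem_iff_toPi]
    intro i
    rw [h i]; trivial

/-- The equivalence between ideals of a finite product and tuples of ideals. -/
def idealPiEquiv : Ideal (∀ i, R i) ≃ ∀ i, Ideal (R i) :=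
  ⟨toPi, ofPi, ofPi_toPi, toPi_ofPi⟩

end PiIdeal

section Chain

lemma span_singleton_eq_of_unit {S : Type*} [CommRing S] {a d a' : S} (h : a' * d = a)
    (hu : IsUnit a') : Ideal.span ({a} : Set S) = Ideal.span ({d} : Set S) := by
  apply le_antisymm
  · rw [Ideal.span_singleton_le_iff_mem]
    exact Ideal.mem_span_singleton'.mpr ⟨a', h⟩
  · rw [Ideal.span_singleton_le_iff_mem]
    obtain ⟨u, rfl⟩ := hu
    refine Ideal.mem_span_singleton'.mpr ⟨↑u⁻¹, ?_⟩
    rw [← h, ← mul_assoc, Units.inv_mul, one_mul]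

lemma chain_ideals {S : Type*} [CommRing S] [IsLocalRing S] [IsPrincipalIdealRing S]
    (I J : Ideal S) : I ≤ J ∨ J ≤ I := by
  obtain ⟨a, haI⟩ := (IsPrincipalIdealRing.principal I).principal
  obtain ⟨b, hbJ⟩ := (IsPrincipalIdealRing.principal J).principal
  rw [Ideal.submodule_span_eq] at haI hbJ
  subst haI; subst hbJ
  obtain ⟨d, hd⟩ := (IsPrincipalIdealRing.principal (Ideal.span {a, b})).principal
  rw [Ideal.submodule_span_eq] at hd
  have ha : a ∈ Ideal.span ({d} : Set S) := by
    rw [← hd]; exact Ideal.subset_span (by simp)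
  have hb : b ∈ Ideal.span ({d} : Set S) := by
    rw [← hd]; exact Ideal.subset_span (by simp)
  obtain ⟨a', ha'⟩ := Ideal.mem_span_singleton'.mp ha
  obtain ⟨b', hb'⟩ := Ideal.mem_span_singleton'.mp hb
  have hdm : d ∈ Ideal.span ({a, b} : Set S) := hd ▸ Ideal.mem_span_singleton_self d
  obtain ⟨x, y, hxy⟩ := Ideal.mem_span_pair.mp hdm
  have key : (x * a' + y * b') * d = d := by
    rw [add_mul, mul_assoc, mul_assoc, ha', hb', hxy]
  rcases IsLocalRing.isUnit_or_isUnit_one_sub_self (x * a' + y * b') with hu | hu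
  · rcases IsLocalRing.isUnit_or_isUnit_of_isUnit_add hu with h1 | h1
    · right
      rw [span_singleton_eq_of_unit ha' (isUnit_of_mul_isUnit_right h1),
        Ideal.span_singleton_le_iff_mem]
      exact hb
    · left
      rw [span_singleton_eq_of_unit hb' (isUnit_of_mul_isUnit_right h1),
        Ideal.span_singleton_le_iff_mem]
      exact ha
  · have hd0 : d = 0 := by
      have h0 : (1 - (x * a' + y * b')) * d = 0 := by rw [sub_mul, one_mul, key, sub_self]
      exact (IsUnit.mul_right_eq_zero hu).mp h0
    left
    have haz : a = 0 := by rw [← ha', hd0, mul_zero]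
    rw [haz, Ideal.span_singleton_eq_bot.mpr rfl]
    exact bot_le

lemma inf_ne_bot' {S : Type*} [CommRing S] [IsLocalRing S] [IsPrincipalIdealRing S]
    {I J : Ideal S} (hI : I ≠ ⊥) (hJ : J ≠ ⊥) : I ⊓ J ≠ ⊥ := by
  rcases chain_ideals I J with h | h
  · rwa [inf_eq_left.mpr h]
  · rwa [inf_eq_right.mpr h]

end Chain

section Counting

lemma card_set_fin (n : ℕ) : Nat.card (Set (Fin n)) = 2 ^ n := by
  rw [Nat.card_eq_fintype_card, Fintype.card_set, Fintype.card_fin]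

lemma inter_family_bound {n : ℕ} (F : Set (Set (Fin n)))
    (hint : ∀ A ∈ F, ∀ B ∈ F, (A ∩ B).Nonempty) : F.ncard ≤ 2 ^ (n - 1) := by
  have hdisj : Disjoint F (compl '' F) := by
    rw [Set.disjoint_left]
    rintro A hA ⟨B, hB, rfl⟩
    obtain ⟨x, hx1, hx2⟩ := hint _ hA B hB
    exact hx1 hx2
  have him : (compl '' F).ncard = F.ncard :=
    Set.ncard_image_of_injOn (compl_injective.injOn)
  have hle : (F ∪ compl '' F).ncard ≤ Nat.card (Set (Fin n)) := by
    rw [← Set.ncard_univ]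
    exact Set.ncard_le_ncard (Set.subset_univ _)
  rw [Set.ncard_union_eq hdisj, him, card_set_fin] at hle
  rcases Nat.eq_zero_or_pos n with rfl | hn
  · omega
  · have hp : 2 ^ n = 2 ^ (n - 1) * 2 := by
      rw [← pow_succ]; congr 1; omega
    omega

lemma card_contains {n : ℕ} (z : Fin n) :
    ({T : Set (Fin n) | z ∈ T}).ncard = 2 ^ (n - 1) := by
  set A : Set (Set (Fin n)) := {T | z ∈ T} with hA
  have hcompl : compl '' A = Aᶜ := by
    ext S
    simp only [Set.mem_image, Set.mem_compl_iff, hA, Set.mem_setOf_eq]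
    constructor
    · rintro ⟨T, hT, rfl⟩; simpa using hT
    · intro hS; exact ⟨Sᶜ, by simpa using hS, by simp⟩
  have h1 : A.ncard + Aᶜ.ncard = Nat.card (Set (Fin n)) := Set.ncard_add_ncard_compl A
  rw [← hcompl, Set.ncard_image_of_injOn (compl_injective.injOn), card_set_fin] at h1
  have hn : 1 ≤ n := z.pos.trans_le (by omega)
  have hp : 2 ^ n = 2 ^ (n - 1) * 2 := by
    rw [← pow_succ]; congr 1; omega
  omega

end Counting

section Main
open scoped Classical
variable {m : ℕ} {R : Fin m → Type*} [∀ i, CommRing (R i)]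
  [∀ i, IsLocalRing (R i)] [∀ i, IsPrincipalIdealRing (R i)]

/-- support of an ideal of the product. -/
def Supp (I : Ideal (∀ i, R i)) : Set (Fin m) := {i | toPi I i ≠ ⊥}

lemma maxid_ne_bot (hnf : ∀ i, ¬ IsField (R i)) (i : Fin m) :
    IsLocalRing.maximalIdeal (R i) ≠ ⊥ := fun h =>
  hnf i (IsLocalRing.isField_iff_maximalIdeal_eq.mpr h)

lemma maxid_ne_top (i : Fin m) : IsLocalRing.maximalIdeal (R i) ≠ ⊤ :=
  Ideal.IsMaximal.ne_top (IsLocalRing.maximalIdeal.isMaximal _)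

lemma supp_nonempty (u : NontrivialIdeal (∀ i, R i)) : (Supp u.1).Nonempty := by
  rw [Set.nonempty_iff_ne_empty]
  intro h
  apply u.2.1
  rw [eq_bot_iff_toPi]
  intro i
  by_contra hi
  exact (Set.eq_empty_iff_forall_notMem.mp h i) hi

lemma adj_iff {u v : NontrivialIdeal (∀ i, R i)} :
    (intersectionGraph (∀ i, R i)).Adj u v ↔ u ≠ v ∧ (Supp u.1 ∩ Supp v.1).Nonempty := by
  rw [show (intersectionGraph (∀ i, R i)).Adj u v ↔ u ≠ v ∧ u.1 ⊓ v.1 ≠ ⊥ from Iff.rfl]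
  constructor
  · rintro ⟨hne, hbot⟩
    refine ⟨hne, ?_⟩
    by_contra hempty
    apply hbot
    rw [eq_bot_iff_toPi]
    intro i
    rw [toPi_inf]
    have h : i ∉ Supp u.1 ∩ Supp v.1 :=
      Set.eq_empty_iff_forall_notMem.mp (Set.not_nonempty_iff_eq_empty.mp hempty) i
    simp only [Set.mem_inter_iff, Supp, Set.mem_setOf_eq, not_and, not_not] at h
    by_cases hu : toPi u.1 i = ⊥
    · rw [Pi.inf_apply, hu]; simp
    · rw [Pi.inf_apply, h hu]; simp
  · rintro ⟨hne, ⟨i, hu, hv⟩⟩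
    refine ⟨hne, ?_⟩
    intro hbot
    have := eq_bot_iff_toPi.mp hbot i
    rw [toPi_inf] at this
    exact inf_ne_bot' hu hv this

/-- An ideal with component the maximal ideal on `T`, zero elsewhere. -/
noncomputable def fT (T : Set (Fin m)) : Ideal (∀ i, R i) :=
  ofPi (fun i => if i ∈ T then IsLocalRing.maximalIdeal (R i) else ⊥)

lemma toPi_fT (T : Set (Fin m)) (i : Fin m) :
    toPi (fT (R := R) T) i = if i ∈ T then IsLocalRing.maximalIdeal (R i) else ⊥ := by
  rw [fT, toPi_ofPi]

lemma supp_fT (hnf : ∀ i, ¬ IsField (R i)) (T : Set (Fin m)) :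
    Supp (fT (R := R) T) = T := by
  ext i
  simp only [Supp, Set.mem_setOf_eq, toPi_fT]
  by_cases h : i ∈ T
  · simp [h, maxid_ne_bot hnf i]
  · simp [h]

lemma fT_ne_bot (hnf : ∀ i, ¬ IsField (R i)) {T : Set (Fin m)} (hT : T.Nonempty) :
    fT (R := R) T ≠ ⊥ := by
  intro h
  obtain ⟨i, hi⟩ := hT
  have := eq_bot_iff_toPi.mp h i
  rw [toPi_fT, if_pos hi] at this
  exact maxid_ne_bot hnf i this

lemma fT_ne_top {T : Set (Fin m)} (hT : T.Nonempty) : fT (R := R) T ≠ ⊤ := by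
  intro h
  obtain ⟨i, hi⟩ := hT
  have := eq_top_iff_toPi.mp h i
  rw [toPi_fT, if_pos hi] at this
  exact maxid_ne_top i this

/-- The vertex associated to a nonempty support set. -/
noncomputable def vT (hnf : ∀ i, ¬ IsField (R i)) {T : Set (Fin m)} (hT : T.Nonempty) :
    NontrivialIdeal (∀ i, R i) :=
  ⟨fT T, fT_ne_bot hnf hT, fT_ne_top hT⟩

/-- the hub : all components the maximal ideal. -/
noncomputable def hub (hnf : ∀ i, ¬ IsField (R i)) [Nonempty (Fin m)] :
    NontrivialIdeal (∀ i, R i) :=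
  vT hnf (T := Set.univ) Set.univ_nonempty

lemma supp_hub (hnf : ∀ i, ¬ IsField (R i)) [Nonempty (Fin m)] :
    Supp (hub hnf : NontrivialIdeal (∀ i, R i)).1 = Set.univ := supp_fT hnf _

lemma edist_of_adj {u v : NontrivialIdeal (∀ i, R i)}
    (h : (intersectionGraph (∀ i, R i)).Adj u v) :
    (intersectionGraph (∀ i, R i)).edist u v = 1 := SimpleGraph.edist_eq_one_iff_adj.mpr h

lemma edist_of_not_adj (hnf : ∀ i, ¬ IsField (R i)) [Nonempty (Fin m)]
    {u v : NontrivialIdeal (∀ i, R i)} (hne : u ≠ v)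
    (h : ¬ (intersectionGraph (∀ i, R i)).Adj u v) :
    (intersectionGraph (∀ i, R i)).edist u v = 2 := by
  set K := hub (R := R) hnf with hK
  have hsupp_inter : ∀ w : NontrivialIdeal (∀ i, R i), (Supp w.1 ∩ Supp K.1).Nonempty := by
    intro w
    obtain ⟨i, hi⟩ := supp_nonempty w
    exact ⟨i, hi, by rw [hK, supp_hub hnf]; trivial⟩
  have huK : u ≠ K := by
    rintro rfl
    refine h (adj_iff.mpr ⟨hne, ?_⟩)
    obtain ⟨i, hi⟩ := supp_nonempty v
    exact ⟨i, by rw [hK, supp_hub hnf]; trivial, hi⟩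
  have hvK : v ≠ K := by
    rintro rfl
    exact h (adj_iff.mpr ⟨hne, hsupp_inter u⟩)
  have h1 : (intersectionGraph (∀ i, R i)).Adj u K := adj_iff.mpr ⟨huK, hsupp_inter u⟩
  have h2 : (intersectionGraph (∀ i, R i)).Adj K v := by
    apply (intersectionGraph (∀ i, R i)).adj_symm
    exact adj_iff.mpr ⟨hvK, hsupp_inter v⟩
  have hle : (intersectionGraph (∀ i, R i)).edist u v ≤ 2 := by
    have := SimpleGraph.edist_le
      (SimpleGraph.Walk.cons h1 (SimpleGraph.Walk.cons h2 SimpleGraph.Walk.nil))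
    simpa using this
  have hge : 2 ≤ (intersectionGraph (∀ i, R i)).edist u v := by
    have h0 : (intersectionGraph (∀ i, R i)).edist u v ≠ 0 :=
      fun h0 => hne (SimpleGraph.edist_eq_zero_iff.mp h0)
    have h1' : (intersectionGraph (∀ i, R i)).edist u v ≠ 1 :=
      fun h1 => h (SimpleGraph.edist_eq_one_iff_adj.mp h1)
    have hpos : 1 ≤ (intersectionGraph (∀ i, R i)).edist u v :=
      ENat.one_le_iff_ne_zero.mpr h0
    have hlt : 1 < (intersectionGraph (∀ i, R i)).edist u v :=
      lt_of_le_of_ne hpos (Ne.symm h1')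
    rw [← one_add_one_eq_two]; exact Order.add_one_le_of_lt hlt
  exact le_antisymm hle hge

/-- the key characterization of strong resolving sets -/
lemma srs_iff (hnf : ∀ i, ¬ IsField (R i)) [Nonempty (Fin m)]
    (W : Set (NontrivialIdeal (∀ i, R i))) :
    IsStrongResolvingSet (intersectionGraph (∀ i, R i)) W ↔
      ∀ u ∈ Wᶜ, ∀ v ∈ Wᶜ, u ≠ v →
        (Supp u.1 ∩ Supp v.1).Nonempty ∧ Supp u.1 ≠ Supp v.1 := by
  constructor
  · intro hsrs u hu v hv hne
    obtain ⟨w, hwW, hcase⟩ := hsrs u v hne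
    have hwu : w ≠ u := fun h => hu (h ▸ hwW)
    have hwv : w ≠ v := fun h => hv (h ▸ hwW)
    have dval : ∀ x y : NontrivialIdeal (∀ i, R i), x ≠ y →
        (intersectionGraph (∀ i, R i)).edist x y = 1 ∨
          (intersectionGraph (∀ i, R i)).edist x y = 2 := by
      intro x y hxy
      by_cases hadj : (intersectionGraph (∀ i, R i)).Adj x y
      · exact Or.inl (edist_of_adj hadj)
      · exact Or.inr (edist_of_not_adj hnf hxy hadj)
    rcases hcase with hc | hc
    · rcases dval w u hwu with h1 | h1 <;> rcases dval w v hwv with h2 | h2 <;>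
        rcases dval v u hne.symm with h3 | h3 <;>
        rw [h1, h2, h3] at hc <;>
        first
        | (exfalso; revert hc; decide)
        | skip
      have hadj_wv : (intersectionGraph (∀ i, R i)).Adj w v :=
        SimpleGraph.edist_eq_one_iff_adj.mp h2
      have hadj_vu : (intersectionGraph (∀ i, R i)).Adj v u :=
        SimpleGraph.edist_eq_one_iff_adj.mp h3
      have hnadj_wu : ¬ (intersectionGraph (∀ i, R i)).Adj w u := by
        intro hadj
        rw [edist_of_adj hadj] at h1
        revert h1; decide
      obtain ⟨_, j, hjv, hju⟩ := adj_iff.mp hadj_vu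
      refine ⟨⟨j, hju, hjv⟩, ?_⟩
      intro heq
      apply hnadj_wu
      obtain ⟨_, i, hiw, hiv⟩ := adj_iff.mp hadj_wv
      exact adj_iff.mpr ⟨hwu, ⟨i, hiw, heq ▸ hiv⟩⟩
    · rcases dval w v hwv with h1 | h1 <;> rcases dval w u hwu with h2 | h2 <;>
        rcases dval u v hne with h3 | h3 <;>
        rw [h1, h2, h3] at hc <;>
        first
        | (exfalso; revert hc; decide)
        | skip
      have hadj_wu : (intersectionGraph (∀ i, R i)).Adj w u :=
        SimpleGraph.edist_eq_one_iff_adj.mp h2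
      have hadj_uv : (intersectionGraph (∀ i, R i)).Adj u v :=
        SimpleGraph.edist_eq_one_iff_adj.mp h3
      have hnadj_wv : ¬ (intersectionGraph (∀ i, R i)).Adj w v := by
        intro hadj
        rw [edist_of_adj hadj] at h1
        revert h1; decide
      obtain ⟨_, hint_uv⟩ := adj_iff.mp hadj_uv
      refine ⟨hint_uv, ?_⟩
      intro heq
      apply hnadj_wv
      obtain ⟨_, i, hiw, hiu⟩ := adj_iff.mp hadj_wu
      exact adj_iff.mpr ⟨hwv, ⟨i, hiw, heq ▸ hiu⟩⟩
  · intro hgood u v hne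
    by_cases hu : u ∈ W
    · exact ⟨u, hu, Or.inr (by rw [SimpleGraph.edist_self, zero_add])⟩
    by_cases hv : v ∈ W
    · exact ⟨v, hv, Or.inl (by rw [SimpleGraph.edist_self, zero_add])⟩
    obtain ⟨hint, hneq⟩ := hgood u hu v hv hne
    have hadj_uv : (intersectionGraph (∀ i, R i)).Adj u v := adj_iff.mpr ⟨hne, hint⟩
    have hsym : (∃ i, i ∈ Supp u.1 ∧ i ∉ Supp v.1) ∨
        (∃ i, i ∈ Supp v.1 ∧ i ∉ Supp u.1) := by
      by_contra hcon
      push_neg at hcon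
      exact hneq (Set.eq_of_subset_of_subset
        (fun i hi => by_contra fun hni => absurd (hcon.1 i hi) (by simpa using hni))
        (fun i hi => by_contra fun hni => absurd (hcon.2 i hi) (by simpa using hni)))
    have build : ∀ a b : NontrivialIdeal (∀ i, R i), a ∉ W → b ∉ W → a ≠ b →
        (Supp a.1 ∩ Supp b.1).Nonempty →
        ∀ i, i ∈ Supp a.1 → i ∉ Supp b.1 →
        ∃ w ∈ W, w ≠ b ∧ (intersectionGraph (∀ i, R i)).Adj w a ∧
          ¬ (intersectionGraph (∀ i, R i)).Adj w b := by
      intro a b haW hbW hab hintab i hia hib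
      set w : NontrivialIdeal (∀ i, R i) := vT hnf (T := {i}) ⟨i, rfl⟩ with hw
      have hsuppw : Supp w.1 = {i} := supp_fT hnf _
      have hwb : w ≠ b := by
        intro h
        rw [h] at hsuppw
        exact hib (hsuppw ▸ rfl)
      have hwa : w ≠ a := by
        intro h
        obtain ⟨j, hja, hjb⟩ := hintab
        have hj : j ∈ Supp w.1 := h ▸ hja
        rw [hsuppw, Set.mem_singleton_iff] at hj
        exact hib (hj ▸ hjb)
      have hnadj_wb : ¬ (intersectionGraph (∀ i, R i)).Adj w b := by
        intro hadj
        obtain ⟨_, j, hjw, hjb⟩ := adj_iff.mp hadj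
        rw [hsuppw, Set.mem_singleton_iff] at hjw
        exact hib (hjw ▸ hjb)
      have hadj_wa : (intersectionGraph (∀ i, R i)).Adj w a :=
        adj_iff.mpr ⟨hwa, ⟨i, by rw [hsuppw]; rfl, hia⟩⟩
      have hwW : w ∈ W := by
        by_contra hwW
        obtain ⟨hint2, _⟩ := hgood w hwW b hbW hwb
        obtain ⟨j, hjw, hjb⟩ := hint2
        rw [hsuppw, Set.mem_singleton_iff] at hjw
        exact hib (hjw ▸ hjb)
      exact ⟨w, hwW, hwb, hadj_wa, hnadj_wb⟩
    rcases hsym with ⟨i, hiu, hiv⟩ | ⟨i, hiv, hiu⟩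
    · obtain ⟨w, hwW, hwv, hadj_wu, hnadj_wv⟩ := build u v hu hv hne hint i hiu hiv
      refine ⟨w, hwW, Or.inr ?_⟩
      rw [edist_of_not_adj hnf hwv hnadj_wv, edist_of_adj hadj_wu, edist_of_adj hadj_uv]
      decide
    · obtain ⟨w, hwW, hwu, hadj_wv, hnadj_wu⟩ := build v u hv hu hne.symm
        (by obtain ⟨j, h1, h2⟩ := hint; exact ⟨j, h2, h1⟩) i hiv hiu
      refine ⟨w, hwW, Or.inl ?_⟩
      rw [edist_of_not_adj hnf hwu hnadj_wu, edist_of_adj hadj_wv,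
        edist_of_adj ((intersectionGraph (∀ i, R i)).adj_symm hadj_uv)]
      decide

end Main

end Aux13

theorem statement13 (m : ℕ) (hm : 2 ≤ m) (R : Fin m → Type*) [∀ i, CommRing (R i)]
    [∀ i, IsArtinianRing (R i)] [∀ i, IsLocalRing (R i)] [∀ i, IsPrincipalIdealRing (R i)]
    (hnf : ∀ i, ¬ IsField (R i))
    (nn : Fin m → ℕ)
    (hfin : ∀ i, {K : Ideal (R i) | K ≠ ⊥ ∧ K ≠ ⊤}.Finite)
    (hcard : ∀ i, {K : Ideal (R i) | K ≠ ⊥ ∧ K ≠ ⊤}.ncard = nn i) :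
    IsLeast {k : ℕ | ∃ W : Set (NontrivialIdeal (∀ i, R i)), W.Finite ∧
        IsStrongResolvingSet (intersectionGraph (∀ i, R i)) W ∧ W.ncard = k}
      ((∏ i, (nn i + 2)) - 2 ^ (m - 1) - 2) := by
  classical
  haveI : Nonempty (Fin m) := ⟨⟨0, by omega⟩⟩
  set z : Fin m := ⟨0, by omega⟩ with hz
  -- finiteness
  haveI hFi : ∀ i, Finite (Ideal (R i)) := by
    intro i
    rw [← Set.finite_univ_iff]
    apply Set.Finite.subset (((hfin i).insert ⊤).insert ⊥)
    intro K _
    by_cases h1 : K = ⊥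
    · simp [h1]
    by_cases h2 : K = ⊤
    · simp [h2]
    · right; right; exact ⟨h1, h2⟩
  haveI hFP : Finite (Ideal (∀ i, R i)) :=
    Finite.of_equiv _ (Aux13.idealPiEquiv (R := R)).symm
  haveI hFV : Finite (NontrivialIdeal (∀ i, R i)) := Subtype.finite
  -- cardinality of the ideal lattice of each factor
  have hcardI : ∀ i, Nat.card (Ideal (R i)) = nn i + 2 := by
    intro i
    have hbt : (⊥ : Ideal (R i)) ≠ ⊤ := by
      intro h
      have h1 : (1 : R i) ∈ (⊥ : Ideal (R i)) := h.symm ▸ Submodule.mem_top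
      rw [Ideal.mem_bot] at h1
      exact one_ne_zero h1
    have huniv : (Set.univ : Set (Ideal (R i))) =
        insert ⊥ (insert ⊤ {K : Ideal (R i) | K ≠ ⊥ ∧ K ≠ ⊤}) := by
      ext K
      simp only [Set.mem_univ, Set.mem_insert_iff, Set.mem_setOf_eq, true_iff]
      by_cases h1 : K = ⊥
      · exact Or.inl h1
      by_cases h2 : K = ⊤
      · exact Or.inr (Or.inl h2)
      · exact Or.inr (Or.inr ⟨h1, h2⟩)
    have hnm1 : (⊥ : Ideal (R i)) ∉ insert ⊤ {K : Ideal (R i) | K ≠ ⊥ ∧ K ≠ ⊤} := by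
      simp [hbt]
    have hnm2 : (⊤ : Ideal (R i)) ∉ {K : Ideal (R i) | K ≠ ⊥ ∧ K ≠ ⊤} := by
      simp
    rw [← Set.ncard_univ, huniv,
      Set.ncard_insert_of_notMem hnm1 ((hfin i).insert ⊤),
      Set.ncard_insert_of_notMem hnm2 (hfin i), hcard i]
  have hcardP : Nat.card (Ideal (∀ i, R i)) = ∏ i, (nn i + 2) := by
    rw [Nat.card_congr (Aux13.idealPiEquiv (R := R)), Nat.card_pi]
    exact Finset.prod_congr rfl (fun i _ => hcardI i)
  have hbtP : (⊥ : Ideal (∀ i, R i)) ≠ ⊤ := by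
    intro h
    have h1 : (1 : ∀ i, R i) ∈ (⊥ : Ideal (∀ i, R i)) := h.symm ▸ Submodule.mem_top
    rw [Ideal.mem_bot] at h1
    exact one_ne_zero (congrFun h1 z)
  have hcardV : Nat.card (NontrivialIdeal (∀ i, R i)) = (∏ i, (nn i + 2)) - 2 := by
    have h1 : Nat.card (NontrivialIdeal (∀ i, R i)) =
        ({I : Ideal (∀ i, R i) | I ≠ ⊥ ∧ I ≠ ⊤}).ncard := Nat.card_coe_set_eq _
    have h2 : {I : Ideal (∀ i, R i) | I ≠ ⊥ ∧ I ≠ ⊤} =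
        Set.univ \ {⊥, ⊤} := by
      ext I
      simp only [Set.mem_setOf_eq, Set.mem_diff, Set.mem_univ, Set.mem_insert_iff,
        Set.mem_singleton_iff, true_and]
      tauto
    rw [h1, h2, Set.ncard_diff (Set.subset_univ _), Set.ncard_univ, hcardP,
      Set.ncard_pair hbtP]
  -- arithmetic bounds
  have hbig : 2 ^ m ≤ ∏ i, (nn i + 2) := by
    calc (2:ℕ) ^ m = ∏ _i : Fin m, 2 := by
          rw [Finset.prod_const, Finset.card_univ, Fintype.card_fin]
      _ ≤ ∏ i, (nn i + 2) :=
          Finset.prod_le_prod (fun _ _ => by omega) (fun _ _ => by omega)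
  have hpow : 2 * 2 ^ (m - 1) = 2 ^ m := by
    rw [← pow_succ']; congr 1; omega
  have hpow2 : 2 ≤ 2 ^ (m - 1) := by
    calc (2:ℕ) = 2 ^ 1 := (pow_one 2).symm
      _ ≤ 2 ^ (m - 1) := Nat.pow_le_pow_right (by norm_num) (by omega)
  constructor
  · -- membership : the explicit strong resolving set
    set S0 : Set (NontrivialIdeal (∀ i, R i)) :=
      {v | v.1 = Aux13.fT (Aux13.Supp v.1) ∧ z ∈ Aux13.Supp v.1} with hS0def
    refine ⟨S0ᶜ, Set.toFinite _, ?_, ?_⟩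
    · rw [Aux13.srs_iff hnf]
      intro u hu v hv hne
      rw [compl_compl] at hu hv
      constructor
      · exact ⟨z, hu.2, hv.2⟩
      · intro heq
        exact hne (Subtype.ext (by rw [hu.1, hv.1, heq]))
    · have hinj : Set.InjOn (fun v : NontrivialIdeal (∀ i, R i) => Aux13.Supp v.1) S0 :=
        fun u hu v hv h => Subtype.ext (by
          rw [hu.1, hv.1]
          exact congrArg _ h)
      have himg : (fun v : NontrivialIdeal (∀ i, R i) => Aux13.Supp v.1) '' S0 =
          {T : Set (Fin m) | z ∈ T} := by
        ext T
        constructor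
        · rintro ⟨v, hv, rfl⟩
          exact hv.2
        · intro hT
          have hTne : T.Nonempty := ⟨z, hT⟩
          have hsv : Aux13.Supp (Aux13.vT (R := R) hnf (T := T) hTne).1 = T :=
            Aux13.supp_fT hnf T
          refine ⟨Aux13.vT hnf hTne, ⟨?_, ?_⟩, hsv⟩
          · rw [hsv]; rfl
          · rw [hsv]; exact hT
      have hS0card : S0.ncard = 2 ^ (m - 1) := by
        rw [← Set.ncard_image_of_injOn hinj, himg, Aux13.card_contains z]
      have hsum := Set.ncard_add_ncard_compl S0
      rw [hS0card, hcardV] at hsum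
      omega
  · -- lower bound
    rintro k ⟨W, hWfin, hSRS, rfl⟩
    have hgood := (Aux13.srs_iff hnf W).mp hSRS
    have hinj : Set.InjOn (fun v : NontrivialIdeal (∀ i, R i) => Aux13.Supp v.1) Wᶜ := by
      intro u hu v hv h
      by_contra hne
      exact (hgood u hu v hv hne).2 h
    have hle : Wᶜ.ncard ≤ 2 ^ (m - 1) := by
      rw [← Set.ncard_image_of_injOn hinj]
      apply Aux13.inter_family_bound
      rintro A ⟨u, hu, rfl⟩ B ⟨v, hv, rfl⟩
      by_cases h : u = v
      · subst h; rw [Set.inter_self]; exact Aux13.supp_nonempty u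
      · exact (hgood u hu v hv h).1
    have hsum := Set.ncard_add_ncard_compl W
    rw [hcardV] at hsum
    omega
end

section
/- Let m, n ≥ 1 be positive integers and R = R_1 × ⋯ × R_m × F_1 × ⋯ × F_n, where each R_i is a commutative Artinian local principal ideal ring that is not a field and each F_j is a field. Let I and J be distinct non-trivial ideals of R, with components over all m + n factors. If I and J have the same zero-pattern (for every factor index k, the k-th component of I is 0 if and only if the k-th component of J is 0), then I and J are mutually maximally distant in G(R). If I and J have different zero-patterns, then I and J are mutually maximally distant in G(R) if and only if I ∩ J = 0. -/
open SimpleGraph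

/-! ### Auxiliary lemmas -/

section Chain

/-- In an Artinian local principal ideal ring, the ideals are totally ordered. -/
lemma IntGraphAux.chain_alpir (A : Type*) [CommRing A] [IsArtinianRing A]
    [IsLocalRing A] [IsPrincipalIdealRing A] (a b : Ideal A) : a ≤ b ∨ b ≤ a := by
  classical
  set M := IsLocalRing.maximalIdeal A with hM
  obtain ⟨s, hs⟩ : IsNilpotent M := by
    have h := IsArtinianRing.isNilpotent_jacobson_bot (R := A)
    rwa [IsLocalRing.jacobson_eq_maximalIdeal ⊥ bot_ne_top] at h
  rw [Submodule.zero_eq_bot] at hs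
  obtain ⟨t, ht⟩ := (IsPrincipalIdealRing.principal M).principal
  rw [Ideal.submodule_span_eq] at ht
  have key : ∀ c : Ideal A, c = ⊥ ∨ ∃ i, c = M ^ i := by
    intro c
    obtain ⟨x, hx⟩ := (IsPrincipalIdealRing.principal c).principal
    rw [Ideal.submodule_span_eq] at hx
    by_cases hx0 : x = 0
    · left; rw [hx, hx0]; exact Ideal.span_singleton_eq_bot.mpr rfl
    right
    have hex : ∃ j, x ∉ M ^ j := ⟨s, by rw [hs]; simpa using hx0⟩
    set j := Nat.find hex with hj
    have hjs : x ∉ M ^ j := Nat.find_spec hex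
    have hj0 : j ≠ 0 := by
      intro h
      apply hjs; rw [h, pow_zero, Ideal.one_eq_top]; exact Submodule.mem_top
    have hxi : x ∈ M ^ (j - 1) := by
      by_contra h
      have := Nat.find_min hex (m := j - 1) (by omega)
      simp only [not_not] at this
      exact h this
    set i := j - 1 with hi
    have hji : j = i + 1 := by omega
    rw [ht, Ideal.span_singleton_pow] at hxi
    obtain ⟨c', hc'⟩ := Ideal.mem_span_singleton'.mp hxi
    have hcu : IsUnit c' := by
      by_contra hcu
      apply hjs
      have : c' ∈ M := hM ▸ (IsLocalRing.mem_maximalIdeal c').mpr hcu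
      rw [ht, Ideal.mem_span_singleton] at this
      obtain ⟨d, hd⟩ := this
      rw [hji, ht, Ideal.span_singleton_pow, Ideal.mem_span_singleton]
      exact ⟨d, by rw [← hc', hd]; ring⟩
    refine ⟨i, ?_⟩
    rw [hx, ht, Ideal.span_singleton_pow, ← hc',
      Ideal.span_singleton_mul_left_unit hcu]
  rcases key a with rfl | ⟨i, rfl⟩
  · exact Or.inl bot_le
  rcases key b with rfl | ⟨k, rfl⟩
  · exact Or.inr bot_le
  rcases le_total i k with h | h
  · exact Or.inr (Ideal.pow_le_pow_right h)
  · exact Or.inl (Ideal.pow_le_pow_right h)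

/-- In a ring which is a field, the ideals are totally ordered. -/
lemma IntGraphAux.chain_field (A : Type*) [CommRing A] (h : IsField A) (a b : Ideal A) :
    a ≤ b ∨ b ≤ a := by
  have key : ∀ c : Ideal A, c = ⊥ ∨ c = ⊤ := by
    intro c
    rcases eq_or_ne c ⊥ with hc | hc
    · exact Or.inl hc
    right
    obtain ⟨x, hx, hx0⟩ := Submodule.ne_bot_iff c |>.mp hc
    obtain ⟨y, hy⟩ := h.mul_inv_cancel hx0
    exact Ideal.eq_top_of_isUnit_mem c hx (IsUnit.of_mul_eq_one (a := x) y hy)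
  rcases key a with rfl | rfl
  · exact Or.inl bot_le
  · exact Or.inr le_top

end Chain

namespace IntGraphAux

section PiLemmas

variable {ι : Type*} [DecidableEq ι] {F : ι → Type*} [∀ i, CommRing (F i)]

lemma eval_surj (k : ι) : Function.Surjective (Pi.evalRingHom F k) :=
  fun a => ⟨Pi.single k a, Pi.single_eq_same k a⟩

lemma single_mem {I : Ideal (∀ i, F i)} {k : ι} {a : F k}
    (ha : a ∈ I.map (Pi.evalRingHom F k)) : Pi.single k a ∈ I := by
  obtain ⟨x, hx, hxa⟩ := (Ideal.mem_map_iff_of_surjective _ (eval_surj k)).mp ha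
  have h : Pi.single k a = Pi.single k (1 : F k) * x := by
    funext i
    rcases eq_or_ne i k with rfl | hik
    · simp [Pi.single_eq_same, ← hxa]
    · simp [Pi.single_eq_of_ne hik]
  rw [h]
  exact I.mul_mem_left _ hx

lemma eq_bot_iff_maps {I : Ideal (∀ i, F i)} :
    I = ⊥ ↔ ∀ k, I.map (Pi.evalRingHom F k) = ⊥ := by
  constructor
  · rintro rfl k; exact Ideal.map_bot
  · intro h
    rw [eq_bot_iff]
    intro x hx
    have : x = 0 := by
      funext k
      have hk : x k ∈ I.map (Pi.evalRingHom F k) := Ideal.mem_map_of_mem _ hx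
      rw [h k] at hk
      simpa using hk
    simp [this]

lemma single_ne_zero_of {k : ι} {a : F k} (ha : a ≠ 0) : Pi.single k a ≠ 0 := by
  intro h
  apply ha
  have := congrFun h k
  simpa using this

/-- If some component of both is nonzero, and ideals of that component are a chain,
then the intersection is nonzero. -/
lemma inf_ne_bot_of_chain {I J : Ideal (∀ i, F i)} {k : ι}
    (hch : ∀ a b : Ideal (F k), a ≤ b ∨ b ≤ a)
    (hI : I.map (Pi.evalRingHom F k) ≠ ⊥) (hJ : J.map (Pi.evalRingHom F k) ≠ ⊥) :
    I ⊓ J ≠ ⊥ := by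
  have hne : I.map (Pi.evalRingHom F k) ⊓ J.map (Pi.evalRingHom F k) ≠ ⊥ := by
    rcases hch (I.map (Pi.evalRingHom F k)) (J.map (Pi.evalRingHom F k)) with h | h
    · rwa [inf_eq_left.mpr h]
    · rwa [inf_eq_right.mpr h]
  obtain ⟨a, ha, ha0⟩ := Submodule.ne_bot_iff _ |>.mp hne
  intro hbot
  refine single_ne_zero_of ha0 ?_
  have : Pi.single k a ∈ I ⊓ J := ⟨single_mem ha.1, single_mem ha.2⟩
  rw [hbot] at this
  simpa using this

lemma exists_of_inf_ne_bot {I J : Ideal (∀ i, F i)} (h : I ⊓ J ≠ ⊥) :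
    ∃ k, I.map (Pi.evalRingHom F k) ≠ ⊥ ∧ J.map (Pi.evalRingHom F k) ≠ ⊥ := by
  obtain ⟨x, hx, hx0⟩ := Submodule.ne_bot_iff _ |>.mp h
  obtain ⟨k, hk⟩ : ∃ k, x k ≠ 0 := by
    by_contra hc
    push_neg at hc
    exact hx0 (funext hc)
  refine ⟨k, ?_, ?_⟩
  · intro hb
    have := Ideal.mem_map_of_mem (Pi.evalRingHom F k) hx.1
    rw [hb] at this
    exact hk (by simpa using this)
  · intro hb
    have := Ideal.mem_map_of_mem (Pi.evalRingHom F k) hx.2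
    rw [hb] at this
    exact hk (by simpa using this)

lemma compl_inf_bot (I : Ideal (∀ i, F i)) : complIdeal F I ⊓ I = ⊥ := by
  rw [eq_bot_iff]
  rintro x ⟨hxc, hxI⟩
  have : x = 0 := by
    funext k
    by_cases hk : I.map (Pi.evalRingHom F k) = ⊥
    · have := Ideal.mem_map_of_mem (Pi.evalRingHom F k) hxI
      rw [hk] at this
      simpa using this
    · exact hxc k hk
  simp [this]

lemma single_mem_compl {I : Ideal (∀ i, F i)} {k : ι} (hk : I.map (Pi.evalRingHom F k) = ⊥)
    (a : F k) : Pi.single k a ∈ complIdeal F I := by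
  intro i hi
  rcases eq_or_ne i k with rfl | hik
  · exact absurd hk hi
  · exact Pi.single_eq_of_ne hik a

lemma compl_ne_top [∀ i, Nontrivial (F i)] {I : Ideal (∀ i, F i)} (hI : I ≠ ⊥) :
    complIdeal F I ≠ ⊤ := by
  intro h
  obtain ⟨k, hk⟩ : ∃ k, I.map (Pi.evalRingHom F k) ≠ ⊥ := by
    by_contra hc
    push_neg at hc
    exact hI (eq_bot_iff_maps.mpr hc)
  have h1 : (1 : ∀ i, F i) ∈ complIdeal F I := h ▸ Submodule.mem_top
  exact one_ne_zero (h1 k hk)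

end PiLemmas

lemma two_le_edist_of {V : Type*} {G : SimpleGraph V} {u v : V} (huv : u ≠ v)
    (hadj : ¬ G.Adj u v) : 2 ≤ G.edist u v := by
  have h0 : G.edist u v ≠ 0 := fun h => huv (SimpleGraph.edist_eq_zero_iff.mp h)
  have h1 : G.edist u v ≠ 1 := fun h => hadj (SimpleGraph.edist_eq_one_iff_adj.mp h)
  have hlt : 1 < G.edist u v :=
    lt_of_le_of_ne (Order.one_le_iff_pos.mpr (pos_iff_ne_zero.mpr h0)) (Ne.symm h1)
  have := Order.add_one_le_of_lt hlt
  rwa [one_add_one_eq_two] at this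

end IntGraphAux

theorem statement15 (m n : ℕ) (hm : 1 ≤ m) (hn : 1 ≤ n)
    (A : Fin m ⊕ Fin n → Type*) [∀ k, CommRing (A k)]
    (hart : ∀ i : Fin m, IsArtinianRing (A (Sum.inl i)))
    (hloc : ∀ i : Fin m, IsLocalRing (A (Sum.inl i)))
    (hpir : ∀ i : Fin m, IsPrincipalIdealRing (A (Sum.inl i)))
    (hnf : ∀ i : Fin m, ¬ IsField (A (Sum.inl i)))
    (hfield : ∀ j : Fin n, IsField (A (Sum.inr j)))
    (I J : NontrivialIdeal (∀ k, A k)) (hIJ : I ≠ J) :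
    ((∀ k, I.1.map (Pi.evalRingHom A k) = ⊥ ↔ J.1.map (Pi.evalRingHom A k) = ⊥) →
        MutuallyMaximallyDistant (intersectionGraph (∀ k, A k)) I J) ∧
      ((∃ k, ¬ (I.1.map (Pi.evalRingHom A k) = ⊥ ↔ J.1.map (Pi.evalRingHom A k) = ⊥)) →
        (MutuallyMaximallyDistant (intersectionGraph (∀ k, A k)) I J ↔ I.1 ⊓ J.1 = ⊥)) := by
  classical
  open IntGraphAux in
  haveI := hart; haveI := hloc; haveI := hpir
  haveI hnt : ∀ k, Nontrivial (A k) := by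
    rintro (i | j)
    · infer_instance
    · exact ⟨(hfield j).exists_pair_ne⟩
  have hch : ∀ k (a b : Ideal (A k)), a ≤ b ∨ b ≤ a := by
    rintro (i | j) a b
    · exact IntGraphAux.chain_alpir _ a b
    · exact IntGraphAux.chain_field _ (hfield j) a b
  set G := intersectionGraph (∀ k, A k) with hG
  -- the hub vertex
  set i₀ : Fin m ⊕ Fin n := Sum.inl ⟨0, hm⟩ with hi₀
  set K₀ : Ideal (A i₀) := IsLocalRing.maximalIdeal (A i₀) with hK₀
  have hK₀b : K₀ ≠ ⊥ := fun h => hnf ⟨0, hm⟩ (IsLocalRing.isField_iff_maximalIdeal_eq.mpr h)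
  have hK₀t : K₀ ≠ ⊤ := Ideal.IsPrime.ne_top'
  set K : Ideal (∀ k, A k) := Ideal.comap (Pi.evalRingHom A i₀) K₀ with hK
  obtain ⟨a₀, ha₀, ha₀0⟩ := Submodule.ne_bot_iff _ |>.mp hK₀b
  have hsK : Pi.single i₀ a₀ ∈ K := by
    simpa [hK, Ideal.mem_comap] using ha₀
  have hKb : K ≠ ⊥ := fun h => IntGraphAux.single_ne_zero_of ha₀0 (by
    have := hsK; rw [h] at this; simpa using this)
  have hKt : K ≠ ⊤ := by
    intro h
    have h1 : (1 : ∀ k, A k) ∈ K := h ▸ Submodule.mem_top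
    exact hK₀t (Ideal.eq_top_iff_one _ |>.mpr (by simpa [hK, Ideal.mem_comap] using h1))
  have hKmaps : ∀ k, K.map (Pi.evalRingHom A k) ≠ ⊥ := by
    intro k hb
    rcases eq_or_ne k i₀ with hki | hk
    · subst hki
      have hmem : a₀ ∈ K.map (Pi.evalRingHom A i₀) := by
        have := Ideal.mem_map_of_mem (Pi.evalRingHom A i₀) hsK
        simpa using this
      rw [hb] at hmem
      exact ha₀0 (by simpa using hmem)
    · have hmem : Pi.single k (1 : A k) ∈ K := by
        simp [hK, Ideal.mem_comap, Pi.single_eq_of_ne (Ne.symm hk)]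
      have : (1 : A k) ∈ K.map (Pi.evalRingHom A k) := by
        have := Ideal.mem_map_of_mem (Pi.evalRingHom A k) hmem
        simpa using this
      rw [hb] at this
      exact (one_ne_zero : (1 : A k) ≠ 0) (by simpa using this)
  set Kv : NontrivialIdeal (∀ k, A k) := ⟨K, hKb, hKt⟩ with hKv
  have hne_bot_exists : ∀ (L : Ideal (∀ k, A k)), L ≠ ⊥ →
      ∃ k, L.map (Pi.evalRingHom A k) ≠ ⊥ := by
    intro L hL
    by_contra hc
    push_neg at hc
    exact hL (IntGraphAux.eq_bot_iff_maps.mpr hc)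
  have hKadj : ∀ u : NontrivialIdeal (∀ k, A k), u.1 ⊓ K ≠ ⊥ := by
    intro u
    obtain ⟨k, hk⟩ := hne_bot_exists u.1 u.2.1
    exact IntGraphAux.inf_ne_bot_of_chain (hch k) hk (hKmaps k)
  have hadj_le_one : ∀ u v : NontrivialIdeal (∀ k, A k), u.1 ⊓ v.1 ≠ ⊥ →
      G.edist u v ≤ 1 := by
    intro u v h
    rcases eq_or_ne u v with rfl | huv
    · simp [SimpleGraph.edist_self]
    · exact le_of_eq (SimpleGraph.edist_eq_one_iff_adj.mpr ⟨huv, h⟩)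
  have hle2 : ∀ u v : NontrivialIdeal (∀ k, A k), G.edist u v ≤ 2 := by
    intro u v
    have h1 : G.edist u Kv ≤ 1 := hadj_le_one u Kv (hKadj u)
    have h2 : G.edist Kv v ≤ 1 := by
      rw [SimpleGraph.edist_comm]
      exact hadj_le_one v Kv (hKadj v)
    calc G.edist u v ≤ G.edist u Kv + G.edist Kv v := SimpleGraph.edist_triangle
      _ ≤ 1 + 1 := add_le_add h1 h2
      _ = 2 := one_add_one_eq_two
  constructor
  · -- same zero pattern
    intro hpat
    have key : ∀ w : NontrivialIdeal (∀ k, A k), I.1 ⊓ w.1 ≠ ⊥ → J.1 ⊓ w.1 ≠ ⊥ := by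
      intro w hw
      obtain ⟨k, hIk, hwk⟩ := IntGraphAux.exists_of_inf_ne_bot hw
      have hJk : J.1.map (Pi.evalRingHom A k) ≠ ⊥ := fun hb => hIk ((hpat k).mpr hb)
      exact IntGraphAux.inf_ne_bot_of_chain (hch k) hJk hwk
    have key' : ∀ w : NontrivialIdeal (∀ k, A k), J.1 ⊓ w.1 ≠ ⊥ → I.1 ⊓ w.1 ≠ ⊥ := by
      intro w hw
      obtain ⟨k, hJk, hwk⟩ := IntGraphAux.exists_of_inf_ne_bot hw
      have hIk : I.1.map (Pi.evalRingHom A k) ≠ ⊥ := fun hb => hJk ((hpat k).mp hb)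
      exact IntGraphAux.inf_ne_bot_of_chain (hch k) hIk hwk
    have hIJinf : I.1 ⊓ J.1 ≠ ⊥ := by
      obtain ⟨k, hk⟩ := hne_bot_exists I.1 I.2.1
      exact IntGraphAux.inf_ne_bot_of_chain (hch k)  hk (fun hb => hk ((hpat k).mpr hb))
    have hd1 : G.edist I J = 1 := SimpleGraph.edist_eq_one_iff_adj.mpr ⟨hIJ, hIJinf⟩
    refine ⟨hIJ, ?_, ?_⟩
    · intro w hw
      rw [hd1]
      exact hadj_le_one J w (key w hw.2)
    · intro w hw
      rw [hd1]
      exact hadj_le_one I w (key' w hw.2)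
  · -- different zero pattern
    intro hdiff
    constructor
    · intro hMMD
      by_contra hne
      have hd1 : G.edist I J = 1 := SimpleGraph.edist_eq_one_iff_adj.mpr ⟨hIJ, hne⟩
      obtain ⟨k₀, hk₀⟩ := hdiff
      by_cases hI0 : I.1.map (Pi.evalRingHom A k₀) = ⊥
      · -- I vanishes at k₀, J does not: use the complement of I as neighbour of J
        have hJ0 : J.1.map (Pi.evalRingHom A k₀) ≠ ⊥ := fun h =>
          hk₀ ⟨fun _ => h, fun _ => hI0⟩
        obtain ⟨a, ha, ha0⟩ := Submodule.ne_bot_iff _ |>.mp hJ0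
        set w : Ideal (∀ k, A k) := complIdeal A I.1 with hw
        have hsw : Pi.single k₀ a ∈ w := IntGraphAux.single_mem_compl hI0 a
        have hsJ : Pi.single k₀ a ∈ J.1 := IntGraphAux.single_mem ha
        have hwb : w ≠ ⊥ := fun h => IntGraphAux.single_ne_zero_of ha0 (by
          have := hsw; rw [h] at this; simpa using this)
        have hwt : w ≠ ⊤ := IntGraphAux.compl_ne_top I.2.1
        have hwI : w ⊓ I.1 = ⊥ := IntGraphAux.compl_inf_bot I.1
        set wv : NontrivialIdeal (∀ k, A k) := ⟨w, hwb, hwt⟩ with hwv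
        have hJw : J.1 ⊓ w ≠ ⊥ := by
          intro h
          refine IntGraphAux.single_ne_zero_of ha0 ?_
          have : Pi.single k₀ a ∈ J.1 ⊓ w := ⟨hsJ, hsw⟩
          rw [h] at this
          simpa using this
        have hJne : J ≠ wv := by
          intro h
          have hv : J.1 = w := congrArg Subtype.val h
          exact hne (by rw [inf_comm, hv]; exact hwI)
        have hadjJ : G.Adj J wv := ⟨hJne, hJw⟩
        have hle := hMMD.2.2 wv hadjJ
        rw [hd1] at hle
        have hIw : ¬ G.Adj I wv := by
          rintro ⟨_, h⟩
          rw [inf_comm] at h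
          exact h hwI
        have hIne : I ≠ wv := by
          intro h
          have hv : I.1 = w := congrArg Subtype.val h
          have h2 := hwI
          rw [← hv, inf_idem] at h2
          exact I.2.1 h2
        have h2 := IntGraphAux.two_le_edist_of hIne hIw
        exact absurd (le_trans h2 hle) (by norm_num)
      · -- J vanishes at k₀, I does not: use the complement of J as neighbour of I
        have hJ0 : J.1.map (Pi.evalRingHom A k₀) = ⊥ := by
          by_contra h
          exact hk₀ (iff_of_false hI0 h)
        obtain ⟨a, ha, ha0⟩ := Submodule.ne_bot_iff _ |>.mp hI0
        set w : Ideal (∀ k, A k) := complIdeal A J.1 with hw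
        have hsw : Pi.single k₀ a ∈ w := IntGraphAux.single_mem_compl hJ0 a
        have hsI : Pi.single k₀ a ∈ I.1 := IntGraphAux.single_mem ha
        have hwb : w ≠ ⊥ := fun h => IntGraphAux.single_ne_zero_of ha0 (by
          have := hsw; rw [h] at this; simpa using this)
        have hwt : w ≠ ⊤ := IntGraphAux.compl_ne_top J.2.1
        have hwJ : w ⊓ J.1 = ⊥ := IntGraphAux.compl_inf_bot J.1
        set wv : NontrivialIdeal (∀ k, A k) := ⟨w, hwb, hwt⟩ with hwv
        have hIw : I.1 ⊓ w ≠ ⊥ := by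
          intro h
          refine IntGraphAux.single_ne_zero_of ha0 ?_
          have : Pi.single k₀ a ∈ I.1 ⊓ w := ⟨hsI, hsw⟩
          rw [h] at this
          simpa using this
        have hIne : I ≠ wv := by
          intro h
          have hv : I.1 = w := congrArg Subtype.val h
          exact hne (by rw [hv]; exact hwJ)
        have hadjI : G.Adj I wv := ⟨hIne, hIw⟩
        have hle := hMMD.2.1 wv hadjI
        rw [hd1] at hle
        have hJw : ¬ G.Adj J wv := by
          rintro ⟨_, h⟩
          rw [inf_comm] at h
          exact h hwJ
        have hJne : J ≠ wv := by
          intro h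
          have hv : J.1 = w := congrArg Subtype.val h
          have h2 := hwJ
          rw [← hv, inf_idem] at h2
          exact J.2.1 h2
        have h2 := IntGraphAux.two_le_edist_of hJne hJw
        exact absurd (le_trans h2 hle) (by norm_num)
    · intro hbot
      have hnadj : ¬ G.Adj I J := fun h => h.2 hbot
      have h2 := IntGraphAux.two_le_edist_of hIJ hnadj
      exact ⟨hIJ, fun w _ => le_trans (hle2 J w) h2, fun w _ => le_trans (hle2 I w) h2⟩
end

section
/- Let m, n ≥ 1 be positive integers and R = R_1 × ⋯ × R_m × F_1 × ⋯ × F_n, where each R_i is a commutative Artinian local principal ideal ring that is not a field and each F_j is a field. Then the maximum cardinality of a set S of non-trivial ideals of R such that no two distinct members of S are mutually maximally distant in G(R) equals 2^{m+n-1}; that is, the independence number of the strong resolving graph satisfies β(G(R)_SR) = 2^{m+n-1}. -/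
set_option linter.unusedSectionVars false

open SimpleGraph

/-! ### Auxiliary lemmas -/

lemma aux17_two_le {d : ℕ∞} (h0 : d ≠ 0) (h1 : d ≠ 1) : 2 ≤ d := by
  induction d using ENat.recTopCoe with
  | top => exact le_top
  | coe n =>
    have h0' : n ≠ 0 := fun h => h0 (by rw [h]; rfl)
    have h1' : n ≠ 1 := fun h => h1 (by rw [h]; rfl)
    exact_mod_cast by omega

/-- In a commutative Artinian local principal ideal ring, two nonzero ideals
have nonzero intersection. -/
lemma aux17_chain_inf_ne_bot {B : Type*} [CommRing B] [IsArtinianRing B] [IsLocalRing B]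
    [IsPrincipalIdealRing B] {I J : Ideal B} (hI : I ≠ ⊥) (hJ : J ≠ ⊥) : I ⊓ J ≠ ⊥ := by
  obtain ⟨t, ht⟩ := (IsPrincipalIdealRing.principal (IsLocalRing.maximalIdeal B)).principal
  obtain ⟨c, hc⟩ := IsArtinianRing.isNilpotent_jacobson_bot (R := B)
  rw [IsLocalRing.jacobson_eq_maximalIdeal (⊥ : Ideal B) bot_ne_top] at hc
  have key : ∀ I : Ideal B, I ≠ ⊥ → ∃ i, t ^ i ∈ I ∧ t ^ i ≠ 0 := by
    intro I hI
    obtain ⟨a, haI, ha⟩ := Submodule.exists_mem_ne_zero_of_ne_bot hI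
    have hex : ∃ i, a ∉ IsLocalRing.maximalIdeal B ^ i := by
      refine ⟨c, fun h => ha ?_⟩
      rw [hc] at h
      simpa using h
    classical
    set i0 := Nat.find hex with hi0
    have hi0pos : 0 < i0 := by
      rcases Nat.eq_zero_or_pos i0 with h | h
      · exfalso
        have := Nat.find_spec hex
        rw [← hi0, h] at this
        simp at this
      · exact h
    have hmem : a ∈ IsLocalRing.maximalIdeal B ^ (i0 - 1) := by
      by_contra h
      have := Nat.find_min' hex h
      omega
    have hnmem : a ∉ IsLocalRing.maximalIdeal B ^ i0 := Nat.find_spec hex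
    have hpow : ∀ j, IsLocalRing.maximalIdeal B ^ j = Ideal.span {t ^ j} := by
      intro j; rw [ht]; exact Ideal.span_singleton_pow t j
    rw [hpow] at hmem
    rw [Ideal.mem_span_singleton'] at hmem
    obtain ⟨u, hu⟩ := hmem
    have hunit : IsUnit u := by
      by_contra hnu
      apply hnmem
      have hu' : u ∈ IsLocalRing.maximalIdeal B := hnu
      have : a ∈ IsLocalRing.maximalIdeal B * IsLocalRing.maximalIdeal B ^ (i0 - 1) := by
        rw [← hu]
        exact Ideal.mul_mem_mul hu' ((hpow (i0-1)).symm ▸ Ideal.subset_span rfl)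
      rw [← pow_succ'] at this
      rwa [Nat.sub_add_cancel hi0pos] at this
    obtain ⟨v, hv⟩ := hunit
    refine ⟨i0 - 1, ?_, fun h => ha ?_⟩
    · have : t ^ (i0 - 1) = ↑v⁻¹ * a := by
        rw [← hu, ← hv, ← mul_assoc]
        simp
      rw [this]
      exact I.mul_mem_left _ haI
    · rw [← hu, h, mul_zero]
  obtain ⟨i, hiI, hi0⟩ := key I hI
  obtain ⟨j, hjJ, hj0⟩ := key J hJ
  rcases le_total i j with h | h
  · have : t ^ j ∈ I := by
      have : t ^ j = t ^ (j - i) * t ^ i := by rw [← pow_add]; congr 1; omega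
      rw [this]; exact I.mul_mem_left _ hiI
    intro hbot
    exact hj0 ((Submodule.eq_bot_iff _).mp hbot _ ⟨this, hjJ⟩)
  · have : t ^ i ∈ J := by
      have : t ^ i = t ^ (i - j) * t ^ j := by rw [← pow_add]; congr 1; omega
      rw [this]; exact J.mul_mem_left _ hjJ
    intro hbot
    exact hi0 ((Submodule.eq_bot_iff _).mp hbot _ ⟨hiI, this⟩)

section PiIdeal

variable {ι : Type*} [Fintype ι] [DecidableEq ι] {A : ι → Type*} [∀ k, CommRing (A k)]

/-- Support of an ideal of a product ring. -/
def aux17_supp (I : Ideal (∀ k, A k)) : Set ι := {k | I.map (Pi.evalRingHom A k) ≠ ⊥}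

lemma aux17_eval_surj (k : ι) : Function.Surjective (Pi.evalRingHom A k) :=
  fun a => ⟨Pi.single k a, Pi.single_eq_same k a⟩

lemma aux17_mem_comp {I : Ideal (∀ k, A k)} {x : ∀ k, A k} (hx : x ∈ I) (k : ι) :
    x k ∈ I.map (Pi.evalRingHom A k) := Ideal.mem_map_of_mem _ hx

lemma aux17_single_mem {I : Ideal (∀ k, A k)} {k : ι} {a : A k}
    (ha : a ∈ I.map (Pi.evalRingHom A k)) : Pi.single k a ∈ I := by
  rw [Ideal.mem_map_iff_of_surjective _ (aux17_eval_surj k)] at ha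
  obtain ⟨x, hxI, hxk⟩ := ha
  have : Pi.single k a = Pi.single k (1 : A k) * x := by
    funext j
    rcases eq_or_ne j k with rfl | hj
    · simp [hxk.symm]
    · simp [Pi.single_eq_of_ne hj]
  rw [this]
  exact I.mul_mem_left _ hxI

lemma aux17_supp_empty_iff {I : Ideal (∀ k, A k)} : aux17_supp I = ∅ ↔ I = ⊥ := by
  constructor
  · intro h
    rw [Set.eq_empty_iff_forall_notMem] at h
    rw [eq_bot_iff]
    intro x hx
    have : x = 0 := by
      funext k
      have hk := h k
      simp only [aux17_supp, Set.mem_setOf_eq, not_not] at hk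
      have := aux17_mem_comp hx k
      rw [hk] at this
      simpa using this
    simp [this]
  · rintro rfl
    simp [aux17_supp, Set.eq_empty_iff_forall_notMem, Ideal.map_bot]

lemma aux17_supp_nonempty {I : Ideal (∀ k, A k)} (hI : I ≠ ⊥) : (aux17_supp I).Nonempty :=
  Set.nonempty_iff_ne_empty.mpr (fun h => hI (aux17_supp_empty_iff.mp h))

lemma aux17_inf_ne_bot (hcomp : ∀ k, ∀ P Q : Ideal (A k), P ≠ ⊥ → Q ≠ ⊥ → P ⊓ Q ≠ ⊥)
    {I J : Ideal (∀ k, A k)} {k : ι} (hkI : k ∈ aux17_supp I) (hkJ : k ∈ aux17_supp J) :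
    I ⊓ J ≠ ⊥ := by
  have h := hcomp k _ _ hkI hkJ
  obtain ⟨a, ⟨haI, haJ⟩, ha⟩ := Submodule.exists_mem_ne_zero_of_ne_bot h
  intro hbot
  have h1 : Pi.single k a ∈ I ⊓ J := ⟨aux17_single_mem haI, aux17_single_mem haJ⟩
  rw [hbot] at h1
  apply ha
  have := congrFun (Submodule.mem_bot _ |>.mp h1) k
  simpa using this

lemma aux17_supp_inter_of_inf_ne_bot {I J : Ideal (∀ k, A k)} (h : I ⊓ J ≠ ⊥) :
    (aux17_supp I ∩ aux17_supp J).Nonempty := by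
  obtain ⟨x, ⟨hxI, hxJ⟩, hx⟩ := Submodule.exists_mem_ne_zero_of_ne_bot h
  have : ∃ k, x k ≠ 0 := by
    by_contra h'
    push_neg at h'
    exact hx (funext h')
  obtain ⟨k, hk⟩ := this
  refine ⟨k, ?_, ?_⟩
  · intro hb
    have := aux17_mem_comp hxI k
    rw [hb] at this
    exact hk (by simpa using this)
  · intro hb
    have := aux17_mem_comp hxJ k
    rw [hb] at this
    exact hk (by simpa using this)

/-- The product ideal with given components. -/
def aux17_piIdeal (C : ∀ k, Ideal (A k)) : Ideal (∀ k, A k) where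
  carrier := {x | ∀ k, x k ∈ C k}
  zero_mem' := fun k => (C k).zero_mem
  add_mem' := fun hx hy k => (C k).add_mem (hx k) (hy k)
  smul_mem' := fun c x hx k => by
    have : (c • x) k = c k • x k := rfl
    rw [this]
    exact (C k).smul_mem (c k) (hx k)

lemma aux17_single_mem_piIdeal {C : ∀ k, Ideal (A k)} {k : ι} {a : A k} (ha : a ∈ C k) :
    Pi.single k a ∈ aux17_piIdeal C := by
  intro j
  rcases eq_or_ne j k with rfl | hj
  · simpa using ha
  · simp [Pi.single_eq_of_ne hj]

lemma aux17_map_piIdeal (C : ∀ k, Ideal (A k)) (k : ι) :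
    (aux17_piIdeal C).map (Pi.evalRingHom A k) = C k := by
  apply le_antisymm
  · rw [Ideal.map_le_iff_le_comap]
    intro x hx
    exact hx k
  · intro a ha
    have := Ideal.mem_map_of_mem (Pi.evalRingHom A k) (aux17_single_mem_piIdeal ha)
    simpa using this

lemma aux17_supp_piIdeal (C : ∀ k, Ideal (A k)) :
    aux17_supp (aux17_piIdeal C) = {k | C k ≠ ⊥} := by
  ext k; simp [aux17_supp, aux17_map_piIdeal]

lemma aux17_piIdeal_ne_top {C : ∀ k, Ideal (A k)} {k : ι} (h : C k ≠ ⊤) :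
    aux17_piIdeal C ≠ ⊤ := by
  intro htop
  apply h
  rw [Ideal.eq_top_iff_one] at htop ⊢
  exact htop k

end PiIdeal

section Main

variable {m n : ℕ} {A : Fin m ⊕ Fin n → Type*} [∀ k, CommRing (A k)]

lemma aux17_ideal_bot_ne_top {B : Type*} [CommRing B] [Nontrivial B] :
    (⊥ : Ideal B) ≠ ⊤ := fun h =>
  one_ne_zero ((Submodule.mem_bot B).mp (h.symm ▸ Submodule.mem_top))

lemma aux17_hcomp (hart : ∀ i : Fin m, IsArtinianRing (A (Sum.inl i)))
    (hloc : ∀ i : Fin m, IsLocalRing (A (Sum.inl i)))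
    (hpir : ∀ i : Fin m, IsPrincipalIdealRing (A (Sum.inl i)))
    (hfield : ∀ j : Fin n, IsField (A (Sum.inr j))) :
    ∀ k, ∀ P Q : Ideal (A k), P ≠ ⊥ → Q ≠ ⊥ → P ⊓ Q ≠ ⊥ := by
  rintro (i | j) P Q hP hQ
  · letI := hart i; letI := hloc i; letI := hpir i
    exact aux17_chain_inf_ne_bot hP hQ
  · letI := (hfield j).toField
    rcases P.eq_bot_or_top with rfl | rfl
    · exact absurd rfl hP
    rcases Q.eq_bot_or_top with rfl | rfl
    · exact absurd rfl hQ
    rw [top_inf_eq]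
    exact (aux17_ideal_bot_ne_top).symm

/-- The "big" family of component ideals: the maximal ideal in the local factors, everything
in the field factors. -/
noncomputable def aux17_big (hloc : ∀ i : Fin m, IsLocalRing (A (Sum.inl i))) :
    ∀ k, Ideal (A k) := fun k =>
  match k with
  | Sum.inl i => @IsLocalRing.maximalIdeal _ _ (hloc i)
  | Sum.inr _ => ⊤

lemma aux17_big_ne_bot (hloc : ∀ i : Fin m, IsLocalRing (A (Sum.inl i)))
    (hnf : ∀ i : Fin m, ¬ IsField (A (Sum.inl i)))
    (hfield : ∀ j : Fin n, IsField (A (Sum.inr j))) :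
    ∀ k, aux17_big hloc k ≠ ⊥ := by
  rintro (i | j) h
  · exact hnf i (letI := hloc i; (IsLocalRing.isField_iff_maximalIdeal_eq).mpr h)
  · letI := (hfield j).toField
    exact (aux17_ideal_bot_ne_top).symm h

lemma aux17_big_inl_ne_top (hloc : ∀ i : Fin m, IsLocalRing (A (Sum.inl i))) (i : Fin m) :
    aux17_big hloc (Sum.inl i) ≠ ⊤ :=
  letI := hloc i
  Ideal.IsMaximal.ne_top (IsLocalRing.maximalIdeal.isMaximal _)

variable [DecidableEq (Fin m ⊕ Fin n)]

/-- The product ideal supported exactly on `T`. -/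
noncomputable def aux17_idl (hloc : ∀ i : Fin m, IsLocalRing (A (Sum.inl i)))
    (T : Finset (Fin m ⊕ Fin n)) : Ideal (∀ k, A k) :=
  aux17_piIdeal (fun k => if k ∈ T then aux17_big hloc k else ⊥)

lemma aux17_supp_idl (hloc : ∀ i : Fin m, IsLocalRing (A (Sum.inl i)))
    (hnf : ∀ i : Fin m, ¬ IsField (A (Sum.inl i)))
    (hfield : ∀ j : Fin n, IsField (A (Sum.inr j)))
    (T : Finset (Fin m ⊕ Fin n)) :
    aux17_supp (aux17_idl hloc T) = ↑T := by
  rw [aux17_idl, aux17_supp_piIdeal]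
  ext k
  by_cases hk : k ∈ T <;> simp [hk, aux17_big_ne_bot hloc hnf hfield k]

lemma aux17_idl_ne_top (hm : 1 ≤ m) (hloc : ∀ i : Fin m, IsLocalRing (A (Sum.inl i)))
    (T : Finset (Fin m ⊕ Fin n)) : aux17_idl hloc T ≠ ⊤ := by
  apply aux17_piIdeal_ne_top (k := Sum.inl ⟨0, hm⟩)
  by_cases hk : Sum.inl ⟨0, hm⟩ ∈ T
  · simp only [hk, if_true]
    exact aux17_big_inl_ne_top hloc _
  · simp only [hk, if_false]
    letI := hloc ⟨0, hm⟩
    exact aux17_ideal_bot_ne_top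

lemma aux17_idl_ne_bot (hloc : ∀ i : Fin m, IsLocalRing (A (Sum.inl i)))
    (hnf : ∀ i : Fin m, ¬ IsField (A (Sum.inl i)))
    (hfield : ∀ j : Fin n, IsField (A (Sum.inr j)))
    {T : Finset (Fin m ⊕ Fin n)} (hT : T.Nonempty) : aux17_idl hloc T ≠ ⊥ := by
  intro h
  have h1 := aux17_supp_idl hloc hnf hfield T
  rw [h, aux17_supp_empty_iff.mpr rfl] at h1
  obtain ⟨k, hk⟩ := hT
  exact (Set.eq_empty_iff_forall_notMem.mp h1.symm k) (by exact_mod_cast hk)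

/-- The vertex of the intersection graph corresponding to `aux17_idl`. -/
noncomputable def aux17_vtx (hm : 1 ≤ m) (hloc : ∀ i : Fin m, IsLocalRing (A (Sum.inl i)))
    (hnf : ∀ i : Fin m, ¬ IsField (A (Sum.inl i)))
    (hfield : ∀ j : Fin n, IsField (A (Sum.inr j)))
    (T : Finset (Fin m ⊕ Fin n)) (hT : T.Nonempty) : NontrivialIdeal (∀ k, A k) :=
  ⟨aux17_idl hloc T, aux17_idl_ne_bot hloc hnf hfield hT, aux17_idl_ne_top hm hloc T⟩

lemma aux17_adj (hcomp : ∀ k, ∀ P Q : Ideal (A k), P ≠ ⊥ → Q ≠ ⊥ → P ⊓ Q ≠ ⊥)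
    {I J : NontrivialIdeal (∀ k, A k)} (hne : I ≠ J) {k : Fin m ⊕ Fin n}
    (hkI : k ∈ aux17_supp I.1) (hkJ : k ∈ aux17_supp J.1) :
    (intersectionGraph (∀ k, A k)).Adj I J :=
  show I ≠ J ∧ I.1 ⊓ J.1 ≠ ⊥ from ⟨hne, aux17_inf_ne_bot hcomp hkI hkJ⟩

lemma aux17_adj_supp {I J : NontrivialIdeal (∀ k, A k)}
    (h : (intersectionGraph (∀ k, A k)).Adj I J) :
    (aux17_supp I.1 ∩ aux17_supp J.1).Nonempty :=
  aux17_supp_inter_of_inf_ne_bot (show I ≠ J ∧ I.1 ⊓ J.1 ≠ ⊥ from h).2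

lemma aux17_not_adj {I J : NontrivialIdeal (∀ k, A k)}
    (h : aux17_supp I.1 ∩ aux17_supp J.1 = ∅) :
    ¬ (intersectionGraph (∀ k, A k)).Adj I J := fun hadj => by
  have := aux17_adj_supp hadj
  rw [h] at this
  exact Set.not_nonempty_empty this

lemma aux17_ne_of_supp {I J : NontrivialIdeal (∀ k, A k)} {k : Fin m ⊕ Fin n}
    (hkI : k ∈ aux17_supp I.1) (hkJ : k ∉ aux17_supp J.1) : I ≠ J := fun h => hkJ (h ▸ hkI)

lemma aux17_edist_le_two (hm : 1 ≤ m)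
    (hloc : ∀ i : Fin m, IsLocalRing (A (Sum.inl i)))
    (hnf : ∀ i : Fin m, ¬ IsField (A (Sum.inl i)))
    (hfield : ∀ j : Fin n, IsField (A (Sum.inr j)))
    (hcomp : ∀ k, ∀ P Q : Ideal (A k), P ≠ ⊥ → Q ≠ ⊥ → P ⊓ Q ≠ ⊥)
    (I J : NontrivialIdeal (∀ k, A k)) :
    (intersectionGraph (∀ k, A k)).edist I J ≤ 2 := by
  rcases eq_or_ne I J with rfl | hne
  · rw [SimpleGraph.edist_self]
    exact zero_le
  by_cases hadj : (intersectionGraph (∀ k, A k)).Adj I J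
  · rw [SimpleGraph.edist_eq_one_iff_adj.mpr hadj]
    exact one_le_two
  · have hdisj : aux17_supp I.1 ∩ aux17_supp J.1 = ∅ := by
      rcases Set.eq_empty_or_nonempty (aux17_supp I.1 ∩ aux17_supp J.1) with h | h
      · exact h
      · obtain ⟨k, hkI, hkJ⟩ := h
        exact absurd (aux17_adj hcomp hne hkI hkJ) hadj
    obtain ⟨k, hkI⟩ := aux17_supp_nonempty I.2.1
    obtain ⟨l, hlJ⟩ := aux17_supp_nonempty J.2.1
    set W := aux17_vtx hm hloc hnf hfield {k, l} ⟨k, Finset.mem_insert_self _ _⟩ with hW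
    have hsW : aux17_supp W.1 = (↑({k, l} : Finset (Fin m ⊕ Fin n)) : Set _) :=
      aux17_supp_idl hloc hnf hfield _
    have hkW : k ∈ aux17_supp W.1 := by rw [hsW]; simp
    have hlW : l ∈ aux17_supp W.1 := by rw [hsW]; simp
    have hlI : l ∉ aux17_supp I.1 := fun h =>
      Set.eq_empty_iff_forall_notMem.mp hdisj l ⟨h, hlJ⟩
    have hkJ : k ∉ aux17_supp J.1 := fun h =>
      Set.eq_empty_iff_forall_notMem.mp hdisj k ⟨hkI, h⟩
    have hIW : (intersectionGraph (∀ k, A k)).Adj I W :=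
      aux17_adj hcomp (aux17_ne_of_supp hlW hlI).symm hkI hkW
    have hWJ : (intersectionGraph (∀ k, A k)).Adj W J :=
      aux17_adj hcomp (aux17_ne_of_supp hkW hkJ) hlW hlJ
    have := SimpleGraph.edist_le (SimpleGraph.Walk.cons hIW (SimpleGraph.Walk.cons hWJ SimpleGraph.Walk.nil))
    simpa using this

lemma aux17_mmd_of_disjoint (hm : 1 ≤ m)
    (hloc : ∀ i : Fin m, IsLocalRing (A (Sum.inl i)))
    (hnf : ∀ i : Fin m, ¬ IsField (A (Sum.inl i)))
    (hfield : ∀ j : Fin n, IsField (A (Sum.inr j)))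
    (hcomp : ∀ k, ∀ P Q : Ideal (A k), P ≠ ⊥ → Q ≠ ⊥ → P ⊓ Q ≠ ⊥)
    {I J : NontrivialIdeal (∀ k, A k)} (hne : I ≠ J)
    (hdisj : aux17_supp I.1 ∩ aux17_supp J.1 = ∅) :
    MutuallyMaximallyDistant (intersectionGraph (∀ k, A k)) I J := by
  have h2 : 2 ≤ (intersectionGraph (∀ k, A k)).edist I J :=
    aux17_two_le (fun h0 => hne (SimpleGraph.edist_eq_zero_iff.mp h0))
      (fun h1 => aux17_not_adj hdisj (SimpleGraph.edist_eq_one_iff_adj.mp h1))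
  exact ⟨hne, fun w _ => le_trans (aux17_edist_le_two hm hloc hnf hfield hcomp J w) h2,
    fun w _ => le_trans (aux17_edist_le_two hm hloc hnf hfield hcomp I w) h2⟩

lemma aux17_mmd_of_eq_supp (hcomp : ∀ k, ∀ P Q : Ideal (A k), P ≠ ⊥ → Q ≠ ⊥ → P ⊓ Q ≠ ⊥)
    {I J : NontrivialIdeal (∀ k, A k)} (hne : I ≠ J)
    (hsupp : aux17_supp I.1 = aux17_supp J.1) :
    MutuallyMaximallyDistant (intersectionGraph (∀ k, A k)) I J := by
  obtain ⟨k, hk⟩ := aux17_supp_nonempty I.2.1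
  have hadj : (intersectionGraph (∀ k, A k)).Adj I J :=
    aux17_adj hcomp hne hk (hsupp ▸ hk)
  have h1 : (intersectionGraph (∀ k, A k)).edist I J = 1 :=
    SimpleGraph.edist_eq_one_iff_adj.mpr hadj
  refine ⟨hne, ?_, ?_⟩
  · intro w hw
    rcases eq_or_ne w J with rfl | hwJ
    · rw [SimpleGraph.edist_self]
      exact zero_le
    · obtain ⟨l, hlI, hlw⟩ := aux17_adj_supp hw
      have hadj' : (intersectionGraph (∀ k, A k)).Adj J w :=
        aux17_adj hcomp hwJ.symm (hsupp ▸ hlI) hlw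
      rw [h1]
      exact le_of_eq (SimpleGraph.edist_eq_one_iff_adj.mpr hadj')
  · intro w hw
    rcases eq_or_ne w I with rfl | hwI
    · rw [SimpleGraph.edist_self]
      exact zero_le
    · obtain ⟨l, hlJ, hlw⟩ := aux17_adj_supp hw
      have hadj' : (intersectionGraph (∀ k, A k)).Adj I w :=
        aux17_adj hcomp hwI.symm (hsupp ▸ hlJ) hlw
      rw [h1]
      exact le_of_eq (SimpleGraph.edist_eq_one_iff_adj.mpr hadj')

lemma aux17_not_mmd (hm : 1 ≤ m)
    (hloc : ∀ i : Fin m, IsLocalRing (A (Sum.inl i)))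
    (hnf : ∀ i : Fin m, ¬ IsField (A (Sum.inl i)))
    (hfield : ∀ j : Fin n, IsField (A (Sum.inr j)))
    (hcomp : ∀ k, ∀ P Q : Ideal (A k), P ≠ ⊥ → Q ≠ ⊥ → P ⊓ Q ≠ ⊥)
    {I J : NontrivialIdeal (∀ k, A k)} {k : Fin m ⊕ Fin n}
    (hkI : k ∈ aux17_supp I.1) (hkJ : k ∉ aux17_supp J.1)
    (hadj : (intersectionGraph (∀ k, A k)).Adj I J) :
    ¬ MutuallyMaximallyDistant (intersectionGraph (∀ k, A k)) I J := by
  intro h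
  obtain ⟨l, hlI, hlJ⟩ := aux17_adj_supp hadj
  have hlk : l ≠ k := fun h' => hkJ (h' ▸ hlJ)
  set W := aux17_vtx hm hloc hnf hfield {k} ⟨k, Finset.mem_singleton_self k⟩ with hWdef
  have hsW : aux17_supp W.1 = (↑({k} : Finset (Fin m ⊕ Fin n)) : Set _) :=
    aux17_supp_idl hloc hnf hfield _
  have hkW : k ∈ aux17_supp W.1 := by rw [hsW]; simp
  have hlW : l ∉ aux17_supp W.1 := by rw [hsW]; simpa using hlk
  have hWI : W ≠ I := (aux17_ne_of_supp hlI hlW).symm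
  have hWJ : W ≠ J := aux17_ne_of_supp hkW hkJ
  have hIW : (intersectionGraph (∀ k, A k)).Adj I W :=
    aux17_adj hcomp hWI.symm hkI hkW
  have h2 := h.2.1 W hIW
  rw [SimpleGraph.edist_eq_one_iff_adj.mpr hadj] at h2
  have hdisjJW : aux17_supp J.1 ∩ aux17_supp W.1 = ∅ := by
    rw [hsW]
    ext x
    simp only [Set.mem_inter_iff, Finset.coe_singleton, Set.mem_singleton_iff,
      Set.mem_empty_iff_false, iff_false, not_and]
    rintro hx rfl
    exact hkJ hx
  have hnadj : ¬ (intersectionGraph (∀ k, A k)).Adj J W := aux17_not_adj hdisjJW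
  have h2' : 2 ≤ (intersectionGraph (∀ k, A k)).edist J W :=
    aux17_two_le (fun h0 => hWJ (SimpleGraph.edist_eq_zero_iff.mp h0).symm)
      (fun h1 => hnadj (SimpleGraph.edist_eq_one_iff_adj.mp h1))
  have : (2 : ℕ∞) ≤ 1 := le_trans h2' h2
  norm_num at this


end Main

theorem statement17 (m n : ℕ) (hm : 1 ≤ m) (hn : 1 ≤ n)
    (A : Fin m ⊕ Fin n → Type*) [∀ k, CommRing (A k)]
    (hart : ∀ i : Fin m, IsArtinianRing (A (Sum.inl i)))
    (hloc : ∀ i : Fin m, IsLocalRing (A (Sum.inl i)))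
    (hpir : ∀ i : Fin m, IsPrincipalIdealRing (A (Sum.inl i)))
    (hnf : ∀ i : Fin m, ¬ IsField (A (Sum.inl i)))
    (hfield : ∀ j : Fin n, IsField (A (Sum.inr j))) :
    IsGreatest {k : ℕ | ∃ S : Set (NontrivialIdeal (∀ k, A k)), S.Finite ∧
        (∀ I ∈ S, ∀ J ∈ S, I ≠ J →
          ¬ MutuallyMaximallyDistant (intersectionGraph (∀ k, A k)) I J) ∧
        S.ncard = k} (2 ^ (m + n - 1)) := by
  classical
  have hcomp := aux17_hcomp hart hloc hpir hfield
  set k0 : Fin m ⊕ Fin n := Sum.inl ⟨0, hm⟩ with hk0def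
  constructor
  · -- membership: exhibit a large family
    simp only [Set.mem_setOf_eq]
    set emb : {j : Fin m ⊕ Fin n // j ≠ k0} ↪ (Fin m ⊕ Fin n) :=
      ⟨Subtype.val, Subtype.val_injective⟩ with hembdef
    have hk0nm : ∀ U : Finset {j : Fin m ⊕ Fin n // j ≠ k0}, k0 ∉ U.map emb := by
      intro U hU
      obtain ⟨a, _, ha⟩ := Finset.mem_map.mp hU
      exact a.2 ha
    set g : Finset {j : Fin m ⊕ Fin n // j ≠ k0} → NontrivialIdeal (∀ k, A k) :=
      fun U => aux17_vtx hm hloc hnf hfield (insert k0 (U.map emb))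
        ⟨k0, Finset.mem_insert_self _ _⟩ with hgdef
    have hsuppg : ∀ U, aux17_supp (g U).1 = ↑(insert k0 (U.map emb)) := fun U =>
      aux17_supp_idl hloc hnf hfield _
    have hgT : ∀ U U', (insert k0 (U.map emb)) = (insert k0 (U'.map emb)) → g U = g U' := by
      intro U U' h
      exact Subtype.ext (by show aux17_idl hloc _ = aux17_idl hloc _; rw [h])
    have hginj : Function.Injective g := by
      intro U U' h
      have hT : (insert k0 (U.map emb) : Finset _) = insert k0 (U'.map emb) := by
        have h2 := congrArg (fun I : NontrivialIdeal (∀ k, A k) => aux17_supp I.1) h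
        simp only [hsuppg] at h2
        exact_mod_cast h2
      apply Finset.map_injective emb
      have h3 := congrArg (fun s : Finset (Fin m ⊕ Fin n) => s.erase k0) hT
      rwa [Finset.erase_insert (hk0nm U), Finset.erase_insert (hk0nm U')] at h3
    refine ⟨Set.range g, Set.finite_range g, ?_, ?_⟩
    · rintro I ⟨U, rfl⟩ J ⟨U', rfl⟩ hne hmmd
      have hk0I : k0 ∈ aux17_supp (g U).1 := by
        rw [hsuppg]
        exact_mod_cast Finset.mem_insert_self _ _
      have hk0J : k0 ∈ aux17_supp (g U').1 := by
        rw [hsuppg]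
        exact_mod_cast Finset.mem_insert_self _ _
      have hadj := aux17_adj hcomp hne hk0I hk0J
      have hTT : insert k0 (U.map emb) ≠ insert k0 (U'.map emb) := fun h => hne (hgT U U' h)
      have hex : ∃ kk, (kk ∈ insert k0 (U.map emb) ∧ kk ∉ insert k0 (U'.map emb)) ∨
          (kk ∈ insert k0 (U'.map emb) ∧ kk ∉ insert k0 (U.map emb)) := by
        by_contra hc
        push_neg at hc
        apply hTT
        ext x
        have := hc x
        tauto
      obtain ⟨kk, hkk⟩ := hex
      rcases hkk with ⟨h1, h2⟩ | ⟨h1, h2⟩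
      · exact aux17_not_mmd hm hloc hnf hfield hcomp
          (by rw [hsuppg]; exact_mod_cast h1)
          (by rw [hsuppg]; exact_mod_cast h2) hadj hmmd
      · exact aux17_not_mmd hm hloc hnf hfield hcomp
          (by rw [hsuppg]; exact_mod_cast h1)
          (by rw [hsuppg]; exact_mod_cast h2) hadj.symm hmmd.symm
    · rw [← Set.image_univ, Set.ncard_image_of_injective _ hginj, Set.ncard_univ,
        Nat.card_eq_fintype_card, Fintype.card_finset]
      congr 1
      have h1 : Fintype.card {j : Fin m ⊕ Fin n // j ≠ k0} =
          Fintype.card (Fin m ⊕ Fin n) - 1 := by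
        have h2 := Fintype.card_subtype_compl (fun j : Fin m ⊕ Fin n => j = k0)
        rw [Fintype.card_subtype_eq] at h2
        exact h2
      rw [h1]
      simp
  · -- upper bound
    rintro k ⟨S, hSfin, hS, rfl⟩
    set f : NontrivialIdeal (∀ k, A k) → Finset (Fin m ⊕ Fin n) :=
      fun I => (Set.toFinite (aux17_supp I.1)).toFinset with hfdef
    have hfc : ∀ I, ↑(f I) = aux17_supp I.1 := fun I => Set.Finite.coe_toFinset _
    have hinj : Set.InjOn f S := by
      intro I hI J hJ h
      by_contra hne
      exact hS I hI J hJ hne (aux17_mmd_of_eq_supp hcomp hne (by rw [← hfc, ← hfc, h]))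
    have hfin2 : (f '' S).Finite := hSfin.image f
    have hint : (↑hfin2.toFinset : Set (Finset (Fin m ⊕ Fin n))).Intersecting := by
      intro a ha b hb hdisj
      simp only [Finset.mem_coe, Set.Finite.mem_toFinset] at ha hb
      obtain ⟨I, hI, rfl⟩ := ha
      obtain ⟨J, hJ, rfl⟩ := hb
      have hde : aux17_supp I.1 ∩ aux17_supp J.1 = ∅ := by
        rw [← hfc, ← hfc, ← Finset.coe_inter, Finset.disjoint_iff_inter_eq_empty.mp hdisj]
        simp
      rcases eq_or_ne I J with rfl | hne
      · rw [Set.inter_self] at hde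
        exact I.2.1 (aux17_supp_empty_iff.mp hde)
      · exact hS I hI J hJ hne (aux17_mmd_of_disjoint hm hloc hnf hfield hcomp hne hde)
    have hcard := hint.card_le
    rw [Fintype.card_finset] at hcard
    have hsc : S.ncard = hfin2.toFinset.card := by
      rw [← Set.ncard_coe_finset, Set.Finite.coe_toFinset, Set.ncard_image_of_injOn hinj]
    have hci : Fintype.card (Fin m ⊕ Fin n) = m + n := by simp
    rw [hci] at hcard
    have hexp : 2 ^ (m + n) = 2 * 2 ^ (m + n - 1) := by
      rw [← pow_succ']
      congr 1
      omega
    rw [hexp] at hcard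
    rw [hsc]
    exact Nat.le_of_mul_le_mul_left hcard two_pos
end

section
/- Let m, n ≥ 1 be positive integers and R = R_1 × ⋯ × R_m × F_1 × ⋯ × F_n, where each R_i is a commutative Artinian local principal ideal ring that is not a field with exactly n_i non-trivial ideals, and each F_j is a field. Then the strong metric dimension of G(R) equals (∏_{i=1}^m (n_i + 2))·2^n − 2^{m+n-1} − 2; that is, the minimum cardinality of a strong resolving set of G(R) is (∏_{i=1}^m (n_i + 2))·2^n − 2^{m+n-1} − 2. -/
open SimpleGraph

/-! ### Auxiliary material -/

namespace PIG

lemma topNeBot {R : Type*} [CommRing R] [Nontrivial R] : (⊤ : Ideal R) ≠ ⊥ := by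
  intro h
  have h1 : (1 : R) ∈ (⊤ : Ideal R) := Submodule.mem_top
  rw [h] at h1
  exact one_ne_zero ((Submodule.mem_bot _).mp h1)

/-- Every ideal of a commutative Artinian local principal ideal ring is comparable
to every other ideal. -/
lemma chain_of_local (R : Type*) [CommRing R] [IsArtinianRing R] [IsLocalRing R]
    [IsPrincipalIdealRing R] (I J : Ideal R) : I ≤ J ∨ J ≤ I := by
  classical
  set M := IsLocalRing.maximalIdeal R with hMdef
  obtain ⟨π, hπ0⟩ := (IsPrincipalIdealRing.principal M).principal
  have hπ : M = Ideal.span {π} := hπ0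
  obtain ⟨N, hN⟩ := IsArtinianRing.isNilpotent_jacobson_bot (R := R)
  rw [IsLocalRing.jacobson_eq_maximalIdeal ⊥ bot_ne_top] at hN
  have hMN : M ^ N = ⊥ := by simpa using hN
  have key : ∀ I : Ideal R, I = ⊥ ∨ ∃ k, I = M ^ k := by
    intro I
    obtain ⟨a, ha0'⟩ := (IsPrincipalIdealRing.principal I).principal
    have ha : I = Ideal.span {a} := ha0'
    by_cases ha0 : a = 0
    · left
      rw [ha, ha0]
      exact Ideal.span_singleton_eq_bot.mpr rfl
    right
    have hex : ∃ k, a ∉ M ^ k := ⟨N, by rw [hMN]; simpa using ha0⟩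
    set k := Nat.find hex with hkdef
    have hknot : a ∉ M ^ k := Nat.find_spec hex
    have hk0 : k ≠ 0 := by
      intro h0
      apply hknot
      rw [h0, pow_zero, Ideal.one_eq_top]
      trivial
    have hmem : a ∈ M ^ (k - 1) := not_not.mp (Nat.find_min hex (by omega))
    have hpow : M ^ (k - 1) = Ideal.span {π ^ (k - 1)} := by
      rw [hπ, Ideal.span_singleton_pow]
    rw [hpow] at hmem
    obtain ⟨c, hc⟩ := Ideal.mem_span_singleton'.mp hmem
    have hcu : IsUnit c := by
      by_contra hcu
      apply hknot
      have hck : c ∈ M := (IsLocalRing.mem_maximalIdeal c).mpr (mem_nonunits_iff.mpr hcu)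
      have hmm : c * π ^ (k - 1) ∈ M * M ^ (k - 1) :=
        Ideal.mul_mem_mul hck (by rw [hpow]; exact Ideal.mem_span_singleton_self _)
      have hkk : M * M ^ (k - 1) = M ^ k := by
        rw [← pow_succ']
        congr 1
        omega
      rw [hkk] at hmm
      rwa [hc] at hmm
    refine ⟨k - 1, ?_⟩
    rw [ha, ← hc, hpow, Ideal.span_singleton_mul_left_unit hcu]
  rcases key I with rfl | ⟨p, rfl⟩
  · exact Or.inl bot_le
  rcases key J with rfl | ⟨q, rfl⟩
  · exact Or.inr bot_le
  rcases le_total p q with h | h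
  · exact Or.inr (Ideal.pow_le_pow_right h)
  · exact Or.inl (Ideal.pow_le_pow_right h)

lemma field_ideal_cases {R : Type*} [CommRing R] (hf : IsField R) (I : Ideal R) :
    I = ⊥ ∨ I = ⊤ := by
  rcases eq_or_ne I ⊥ with h | h
  · exact Or.inl h
  right
  obtain ⟨x, hx, hx0⟩ := Submodule.exists_mem_ne_zero_of_ne_bot h
  obtain ⟨y, hy⟩ := hf.mul_inv_cancel hx0
  exact Ideal.eq_top_of_isUnit_mem I hx (IsUnit.of_mul_eq_one y hy)

lemma card_ideal_of_isField {R : Type*} [CommRing R] [Nontrivial R] (hf : IsField R) :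
    Nat.card (Ideal R) = 2 := by
  rw [Nat.card_eq_two_iff]
  refine ⟨⊥, ⊤, fun h => topNeBot h.symm, ?_⟩
  apply Set.eq_univ_of_forall
  intro I
  rcases field_ideal_cases hf I with h | h <;> simp [h]

section PiRing

variable {ι : Type*} [Fintype ι] [DecidableEq ι] {A : ι → Type*} [∀ i, CommRing (A i)]

/-- The `k`-th component of an ideal of a finite product ring. -/
def comp (I : Ideal (∀ i, A i)) (k : ι) : Ideal (A k) := I.map (Pi.evalRingHom A k)

lemma comp_def (I : Ideal (∀ i, A i)) (k : ι) : comp I k = I.map (Pi.evalRingHom A k) := rfl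

lemma eval_surjective (k : ι) : Function.Surjective (Pi.evalRingHom A k) := fun b =>
  ⟨Pi.single k b, Pi.single_eq_same k b⟩

lemma mem_comp {I : Ideal (∀ i, A i)} {k : ι} {y : A k} :
    y ∈ comp I k ↔ ∃ x ∈ I, x k = y := by
  rw [comp_def, Ideal.mem_map_iff_of_surjective _ (eval_surjective k)]
  rfl

lemma comp_bot (k : ι) : comp (⊥ : Ideal (∀ i, A i)) k = ⊥ := by
  rw [comp_def]
  exact Ideal.map_bot

lemma comp_top (k : ι) : comp (⊤ : Ideal (∀ i, A i)) k = ⊤ := by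
  rw [comp_def]
  exact Ideal.map_top _

lemma mem_iff {I : Ideal (∀ i, A i)} {x : ∀ i, A i} :
    x ∈ I ↔ ∀ k, x k ∈ comp I k := by
  constructor
  · exact fun hx k => Ideal.mem_map_of_mem _ hx
  · intro h
    rw [← Finset.univ_sum_single x]
    refine Ideal.sum_mem _ fun k _ => ?_
    obtain ⟨y, hy, hyk⟩ := mem_comp.mp (h k)
    have hxy : Pi.single k (x k) = Pi.single k (1 : A k) * y := by
      funext j
      rcases eq_or_ne j k with rfl | hj
      · simp [hyk]
      · simp [Pi.single_eq_of_ne hj]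
    rw [hxy]
    exact I.mul_mem_left _ hy

/-- The product of a family of ideals, as an ideal of the product ring. -/
def piIdeal (J : ∀ i, Ideal (A i)) : Ideal (∀ i, A i) where
  carrier := {x | ∀ k, x k ∈ J k}
  zero_mem' := fun k => (J k).zero_mem
  add_mem' := fun hx hy k => (J k).add_mem (hx k) (hy k)
  smul_mem' := fun c _ hx k => by
    simpa using (J k).mul_mem_left (c k) (hx k)

lemma mem_piIdeal {J : ∀ i, Ideal (A i)} {x : ∀ i, A i} :
    x ∈ piIdeal J ↔ ∀ k, x k ∈ J k := Iff.rfl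

lemma single_mem_piIdeal {J : ∀ i, Ideal (A i)} {k : ι} {y : A k} (hy : y ∈ J k) :
    Pi.single k y ∈ piIdeal J := by
  rw [mem_piIdeal]
  intro j
  rcases eq_or_ne j k with rfl | hj
  · simpa using hy
  · simp [Pi.single_eq_of_ne hj]

lemma comp_piIdeal (J : ∀ i, Ideal (A i)) (k : ι) : comp (piIdeal J) k = J k := by
  apply le_antisymm
  · rw [comp_def, Ideal.map_le_iff_le_comap]
    exact fun x hx => hx k
  · intro y hy
    simpa [comp_def] using Ideal.mem_map_of_mem (Pi.evalRingHom A k) (single_mem_piIdeal hy)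

lemma eq_bot_iff_comp {I : Ideal (∀ i, A i)} : I = ⊥ ↔ ∀ k, comp I k = ⊥ := by
  constructor
  · rintro rfl k
    exact comp_bot k
  · intro h
    rw [eq_bot_iff]
    intro x hx
    have hx0 : ∀ k, x k = 0 := fun k => by
      have hmem := mem_iff.mp hx k
      rw [h k] at hmem
      simpa using hmem
    have : x = 0 := funext hx0
    simp [this]

lemma eq_top_iff_comp {I : Ideal (∀ i, A i)} : I = ⊤ ↔ ∀ k, comp I k = ⊤ := by
  constructor
  · rintro rfl k
    exact comp_top k
  · intro h
    rw [Ideal.eq_top_iff_one, mem_iff]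
    intro k
    simp [h k]

/-- The ideal lattice of a finite product is the product of the ideal lattices. -/
noncomputable def idealEquiv : Ideal (∀ i, A i) ≃ ∀ i, Ideal (A i) where
  toFun I k := comp I k
  invFun J := piIdeal J
  left_inv I := Submodule.ext fun x => mem_piIdeal.trans mem_iff.symm
  right_inv J := funext fun k => comp_piIdeal J k

lemma exists_comp_ne_bot {I J : Ideal (∀ i, A i)} (h : I ⊓ J ≠ ⊥) :
    ∃ k, comp I k ≠ ⊥ ∧ comp J k ≠ ⊥ := by
  obtain ⟨x, hx, hx0⟩ := Submodule.exists_mem_ne_zero_of_ne_bot h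
  have hk : ∃ k, x k ≠ 0 := by
    by_contra hc
    push_neg at hc
    exact hx0 (funext hc)
  obtain ⟨k, hk⟩ := hk
  refine ⟨k, ?_, ?_⟩
  · intro hb
    have := mem_iff.mp (Submodule.mem_inf.mp hx).1 k
    rw [hb] at this
    exact hk (by simpa using this)
  · intro hb
    have := mem_iff.mp (Submodule.mem_inf.mp hx).2 k
    rw [hb] at this
    exact hk (by simpa using this)

lemma inf_ne_bot (hchain : ∀ k : ι, ∀ P Q : Ideal (A k), P ≤ Q ∨ Q ≤ P)
    {I J : Ideal (∀ i, A i)} {k : ι} (hI : comp I k ≠ ⊥) (hJ : comp J k ≠ ⊥) :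
    I ⊓ J ≠ ⊥ := by
  have key : ∀ I J : Ideal (∀ i, A i), comp I k ≤ comp J k → comp I k ≠ ⊥ → I ⊓ J ≠ ⊥ := by
    intro I J hle hne
    obtain ⟨y, hy, hy0⟩ := Submodule.exists_mem_ne_zero_of_ne_bot hne
    have hxI : Pi.single k y ∈ I := by
      rw [mem_iff]
      intro j
      rcases eq_or_ne j k with rfl | hj
      · simpa using hy
      · simp [Pi.single_eq_of_ne hj]
    have hxJ : Pi.single k y ∈ J := by
      rw [mem_iff]
      intro j
      rcases eq_or_ne j k with rfl | hj
      · simpa using hle hy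
      · simp [Pi.single_eq_of_ne hj]
    rw [Submodule.ne_bot_iff]
    exact ⟨Pi.single k y, Submodule.mem_inf.mpr ⟨hxI, hxJ⟩,
      fun h0 => hy0 (by simpa using congrFun h0 k)⟩
  rcases hchain k (comp I k) (comp J k) with h | h
  · exact key I J h hI
  · rw [inf_comm]
    exact key J I h hJ

/-- The support of an ideal of the product ring. -/
noncomputable def supp (I : Ideal (∀ i, A i)) : Finset ι := by
  classical exact Finset.univ.filter fun k => comp I k ≠ ⊥

lemma mem_supp (I : Ideal (∀ i, A i)) (k : ι) : k ∈ supp I ↔ comp I k ≠ ⊥ := by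
  classical
  simp [supp]

lemma supp_nonempty (u : NontrivialIdeal (∀ i, A i)) : (supp u.1).Nonempty := by
  classical
  by_contra h
  rw [Finset.not_nonempty_iff_eq_empty] at h
  apply u.2.1
  rw [eq_bot_iff_comp]
  intro k
  by_contra hk
  have hks : k ∈ supp u.1 := (mem_supp _ _).mpr hk
  rw [h] at hks
  simp at hks

lemma ne_of_supp_ne {u v : NontrivialIdeal (∀ i, A i)} (h : supp u.1 ≠ supp v.1) :
    u ≠ v := fun he => h (by rw [he])

lemma adj_iff (hchain : ∀ k : ι, ∀ P Q : Ideal (A k), P ≤ Q ∨ Q ≤ P)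
    (u v : NontrivialIdeal (∀ i, A i)) :
    (intersectionGraph (∀ i, A i)).Adj u v ↔
      u ≠ v ∧ (supp u.1 ∩ supp v.1).Nonempty := by
  constructor
  · rintro (⟨hne, hinf⟩ : u ≠ v ∧ u.1 ⊓ v.1 ≠ ⊥)
    obtain ⟨k, h1, h2⟩ := exists_comp_ne_bot hinf
    exact ⟨hne, ⟨k, Finset.mem_inter.mpr ⟨(mem_supp _ _).mpr h1, (mem_supp _ _).mpr h2⟩⟩⟩
  · rintro ⟨hne, ⟨k, hk⟩⟩
    rw [Finset.mem_inter] at hk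
    exact (⟨hne, inf_ne_bot hchain ((mem_supp _ _).mp hk.1) ((mem_supp _ _).mp hk.2)⟩ :
      u ≠ v ∧ u.1 ⊓ v.1 ≠ ⊥)

lemma edist_eq_one (hchain : ∀ k : ι, ∀ P Q : Ideal (A k), P ≤ Q ∨ Q ≤ P)
    {u v : NontrivialIdeal (∀ i, A i)} (hne : u ≠ v)
    (hint : (supp u.1 ∩ supp v.1).Nonempty) :
    (intersectionGraph (∀ i, A i)).edist u v = 1 :=
  SimpleGraph.edist_eq_one_iff_adj.mpr ((adj_iff hchain u v).mpr ⟨hne, hint⟩)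

lemma edist_le_two (hchain : ∀ k : ι, ∀ P Q : Ideal (A k), P ≤ Q ∨ Q ≤ P)
    (K : NontrivialIdeal (∀ i, A i)) (hK : supp K.1 = Finset.univ)
    (u v : NontrivialIdeal (∀ i, A i)) :
    (intersectionGraph (∀ i, A i)).edist u v ≤ 2 := by
  classical
  rcases eq_or_ne u v with rfl | hne
  · simp [SimpleGraph.edist_self]
  rcases (supp u.1 ∩ supp v.1).eq_empty_or_nonempty with hint | hint
  swap
  · rw [edist_eq_one hchain hne hint]
    exact one_le_two
  have hu : supp u.1 ≠ Finset.univ := by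
    intro h
    obtain ⟨k, hk⟩ := supp_nonempty v
    have hmm : k ∈ supp u.1 ∩ supp v.1 := by
      rw [h]
      simpa using hk
    rw [hint] at hmm
    simp at hmm
  have hv : supp v.1 ≠ Finset.univ := by
    intro h
    obtain ⟨k, hk⟩ := supp_nonempty u
    have hmm : k ∈ supp u.1 ∩ supp v.1 := by
      rw [h]
      simpa using hk
    rw [hint] at hmm
    simp at hmm
  have hadju : (intersectionGraph (∀ i, A i)).edist u K = 1 := by
    apply edist_eq_one hchain
    · exact fun h => hu (by rw [h, hK])
    · obtain ⟨k, hk⟩ := supp_nonempty u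
      exact ⟨k, Finset.mem_inter.mpr ⟨hk, by simp [hK]⟩⟩
  have hadjv : (intersectionGraph (∀ i, A i)).edist K v = 1 := by
    apply edist_eq_one hchain
    · exact fun h => hv (by rw [← h, hK])
    · obtain ⟨k, hk⟩ := supp_nonempty v
      exact ⟨k, Finset.mem_inter.mpr ⟨by simp [hK], hk⟩⟩
  calc (intersectionGraph (∀ i, A i)).edist u v
      ≤ (intersectionGraph (∀ i, A i)).edist u K + (intersectionGraph (∀ i, A i)).edist K v :=
        SimpleGraph.edist_triangle
    _ = 2 := by rw [hadju, hadjv]; exact one_add_one_eq_two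

lemma edist_eq_two (hchain : ∀ k : ι, ∀ P Q : Ideal (A k), P ≤ Q ∨ Q ≤ P)
    (K : NontrivialIdeal (∀ i, A i)) (hK : supp K.1 = Finset.univ)
    {u v : NontrivialIdeal (∀ i, A i)} (hne : u ≠ v)
    (hint : supp u.1 ∩ supp v.1 = ∅) :
    (intersectionGraph (∀ i, A i)).edist u v = 2 := by
  refine le_antisymm (edist_le_two hchain K hK u v) ?_
  have h0 : (intersectionGraph (∀ i, A i)).edist u v ≠ 0 := fun h =>
    hne (SimpleGraph.edist_eq_zero_iff.mp h)
  have h1 : (intersectionGraph (∀ i, A i)).edist u v ≠ 1 := by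
    intro h
    obtain ⟨-, hi⟩ := (adj_iff hchain u v).mp (SimpleGraph.edist_eq_one_iff_adj.mp h)
    rw [hint] at hi
    simp at hi
  cases h : (intersectionGraph (∀ i, A i)).edist u v with
  | top => exact le_top
  | coe a =>
    rw [h] at h0 h1
    have ha : 2 ≤ a := by
      rcases a with _ | _ | a
      · simp at h0
      · exact absurd (by norm_num) h1
      · omega
    exact_mod_cast ha

lemma resolve_aux (hchain : ∀ k : ι, ∀ P Q : Ideal (A k), P ≤ Q ∨ Q ≤ P)
    (K : NontrivialIdeal (∀ i, A i)) (hK : supp K.1 = Finset.univ)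
    {u v w : NontrivialIdeal (∀ i, A i)}
    (huv : u ≠ v) (hwu : w ≠ u) (hwv : w ≠ v)
    (h : (intersectionGraph (∀ i, A i)).edist w u =
      (intersectionGraph (∀ i, A i)).edist w v + (intersectionGraph (∀ i, A i)).edist v u) :
    (supp u.1 ∩ supp v.1).Nonempty ∧ ∃ kk, kk ∈ supp v.1 ∧ kk ∉ supp u.1 := by
  classical
  have hale := edist_le_two hchain K hK w u
  have hble := edist_le_two hchain K hK w v
  have hcle := edist_le_two hchain K hK v u
  have h2lt : (2 : ℕ∞) < ⊤ := by
    have := ENat.coe_lt_top 2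
    exact_mod_cast this
  have hatop : (intersectionGraph (∀ i, A i)).edist w u ≠ ⊤ :=
    (lt_of_le_of_lt hale h2lt).ne
  have hbtop : (intersectionGraph (∀ i, A i)).edist w v ≠ ⊤ :=
    (lt_of_le_of_lt hble h2lt).ne
  have hctop : (intersectionGraph (∀ i, A i)).edist v u ≠ ⊤ :=
    (lt_of_le_of_lt hcle h2lt).ne
  set a : ℕ := ((intersectionGraph (∀ i, A i)).edist w u).toNat with hadef
  set b : ℕ := ((intersectionGraph (∀ i, A i)).edist w v).toNat with hbdef
  set c : ℕ := ((intersectionGraph (∀ i, A i)).edist v u).toNat with hcdef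
  have ha : (a : ℕ∞) = (intersectionGraph (∀ i, A i)).edist w u := ENat.coe_toNat hatop
  have hb : (b : ℕ∞) = (intersectionGraph (∀ i, A i)).edist w v := ENat.coe_toNat hbtop
  have hc : (c : ℕ∞) = (intersectionGraph (∀ i, A i)).edist v u := ENat.coe_toNat hctop
  rw [← ha] at h hale
  rw [← hb] at h hble
  rw [← hc] at h hcle
  have ha0 : a ≠ 0 := by
    intro h0
    rw [h0] at ha
    exact hwu (SimpleGraph.edist_eq_zero_iff.mp (by rw [← ha]; norm_cast))
  have hb0 : b ≠ 0 := by
    intro h0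
    rw [h0] at hb
    exact hwv (SimpleGraph.edist_eq_zero_iff.mp (by rw [← hb]; norm_cast))
  have hc0 : c ≠ 0 := by
    intro h0
    rw [h0] at hc
    exact huv (SimpleGraph.edist_eq_zero_iff.mp (by rw [← hc]; norm_cast)).symm
  have hnat : a = b + c := by exact_mod_cast h
  have hana : a ≤ 2 := by exact_mod_cast hale
  have hb1 : b = 1 := by omega
  have hc1 : c = 1 := by omega
  have ha2 : a = 2 := by omega
  -- v and u are adjacent
  have hadjvu := (adj_iff hchain v u).mp (SimpleGraph.edist_eq_one_iff_adj.mp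
    (by rw [← hc, hc1]; norm_cast))
  -- w and v are adjacent
  have hadjwv := (adj_iff hchain w v).mp (SimpleGraph.edist_eq_one_iff_adj.mp
    (by rw [← hb, hb1]; norm_cast))
  -- w and u are not adjacent
  have hnadjwu : ¬ (intersectionGraph (∀ i, A i)).Adj w u := by
    intro hadj
    have := SimpleGraph.edist_eq_one_iff_adj.mpr hadj
    rw [← ha, ha2] at this
    exact absurd (by exact_mod_cast this) (by norm_num : (2 : ℕ) ≠ 1)
  have hdisj : supp w.1 ∩ supp u.1 = ∅ := by
    by_contra hne'
    exact hnadjwu ((adj_iff hchain w u).mpr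
      ⟨hwu, Finset.nonempty_iff_ne_empty.mpr hne'⟩)
  obtain ⟨-, hintvu⟩ := hadjvu
  obtain ⟨-, kk, hkk⟩ := hadjwv
  rw [Finset.mem_inter] at hkk
  refine ⟨by rwa [Finset.inter_comm] at hintvu, kk, hkk.2, fun hmem => ?_⟩
  have : kk ∈ supp w.1 ∩ supp u.1 := Finset.mem_inter.mpr ⟨hkk.1, hmem⟩
  rw [hdisj] at this
  simp at this

/-- The basic "capped" ideal: elements are in `M` at coordinate `k₀` and vanish
outside `S`. -/
def capIdeal (k₀ : ι) (M : Ideal (A k₀)) (S : Finset ι) : Ideal (∀ i, A i) where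
  carrier := {x | x k₀ ∈ M ∧ ∀ j ∉ S, x j = 0}
  zero_mem' := ⟨M.zero_mem, fun _ _ => rfl⟩
  add_mem' := fun {x y} hx hy => ⟨M.add_mem hx.1 hy.1, fun j hj => by
    simp [Pi.add_apply, hx.2 j hj, hy.2 j hj]⟩
  smul_mem' := fun c {x} hx => ⟨by simpa using M.mul_mem_left (c k₀) hx.1, fun j hj => by
    simp [Pi.smul_apply, smul_eq_mul, hx.2 j hj]⟩

lemma mem_capIdeal {k₀ : ι} {M : Ideal (A k₀)} {S : Finset ι} {x : ∀ i, A i} :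
    x ∈ capIdeal k₀ M S ↔ x k₀ ∈ M ∧ ∀ j ∉ S, x j = 0 := Iff.rfl

lemma comp_capIdeal_self {k₀ : ι} {M : Ideal (A k₀)} {S : Finset ι} (hS : k₀ ∈ S) :
    comp (capIdeal k₀ M S) k₀ = M := by
  apply le_antisymm
  · rw [comp_def, Ideal.map_le_iff_le_comap]
    exact fun x hx => hx.1
  · intro y hy
    have hmem : Pi.single k₀ y ∈ capIdeal k₀ M S :=
      ⟨by simpa using hy, fun j hj => Pi.single_eq_of_ne (fun h => hj (by rw [h]; exact hS)) y⟩
    simpa [comp_def] using Ideal.mem_map_of_mem (Pi.evalRingHom A k₀) hmem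

lemma comp_capIdeal_mem {k₀ : ι} {M : Ideal (A k₀)} {S : Finset ι} {j : ι} (hj : j ∈ S)
    (hjk : j ≠ k₀) : comp (capIdeal k₀ M S) j = ⊤ := by
  rw [Ideal.eq_top_iff_one]
  have hmem : Pi.single j (1 : A j) ∈ capIdeal k₀ M S :=
    ⟨by rw [Pi.single_eq_of_ne (Ne.symm hjk)]; exact M.zero_mem,
     fun j' hj' => Pi.single_eq_of_ne (fun h => hj' (by rw [h]; exact hj)) 1⟩
  simpa [comp_def] using Ideal.mem_map_of_mem (Pi.evalRingHom A j) hmem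

lemma comp_capIdeal_not_mem {k₀ : ι} {M : Ideal (A k₀)} {S : Finset ι} {j : ι} (hj : j ∉ S) :
    comp (capIdeal k₀ M S) j = ⊥ := by
  rw [eq_bot_iff, comp_def, Ideal.map_le_iff_le_comap]
  intro x hx
  rw [Ideal.mem_comap]
  simpa using hx.2 j hj

lemma capIdeal_ne_bot {k₀ : ι} {M : Ideal (A k₀)} {S : Finset ι} (hM : M ≠ ⊥)
    (hS : k₀ ∈ S) : capIdeal k₀ M S ≠ ⊥ := by
  intro h
  apply hM
  rw [← comp_capIdeal_self (M := M) hS, h, comp_bot]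

lemma capIdeal_ne_top {k₀ : ι} {M : Ideal (A k₀)} {S : Finset ι} (hM : M ≠ ⊤)
    (hS : k₀ ∈ S) : capIdeal k₀ M S ≠ ⊤ := by
  intro h
  apply hM
  rw [← comp_capIdeal_self (M := M) hS, h, comp_top]

lemma supp_capIdeal [∀ i, Nontrivial (A i)] {k₀ : ι} {M : Ideal (A k₀)} (hM : M ≠ ⊥)
    {S : Finset ι} (hS : k₀ ∈ S) : supp (capIdeal k₀ M S) = S := by
  ext j
  rw [mem_supp]
  rcases eq_or_ne j k₀ with rfl | hj
  · rw [comp_capIdeal_self hS]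
    exact iff_of_true hM hS
  by_cases hjS : j ∈ S
  · rw [comp_capIdeal_mem hjS hj]
    exact iff_of_true topNeBot hjS
  · rw [comp_capIdeal_not_mem hjS]
    exact iff_of_false (by simp) hjS

/-- The "capped" vertex. -/
noncomputable def capVert (k₀ : ι) (M : Ideal (A k₀)) (hMb : M ≠ ⊥) (hMt : M ≠ ⊤)
    (S : Finset ι) (hS : k₀ ∈ S) : NontrivialIdeal (∀ i, A i) :=
  ⟨capIdeal k₀ M S, capIdeal_ne_bot hMb hS, capIdeal_ne_top hMt hS⟩

lemma supp_capVert [∀ i, Nontrivial (A i)] (k₀ : ι) (M : Ideal (A k₀)) (hMb : M ≠ ⊥)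
    (hMt : M ≠ ⊤) (S : Finset ι) (hS : k₀ ∈ S) :
    supp (capVert k₀ M hMb hMt S hS).1 = S := supp_capIdeal hMb hS

/-- The ideal with support `{k}`. -/
def singIdeal (k : ι) : Ideal (∀ i, A i) :=
  piIdeal fun j => if j = k then ⊤ else ⊥

lemma comp_singIdeal (k j : ι) :
    comp (singIdeal (A := A) k) j = if j = k then ⊤ else ⊥ := comp_piIdeal _ _

lemma singIdeal_ne_bot [∀ i, Nontrivial (A i)] (k : ι) : singIdeal (A := A) k ≠ ⊥ := by
  intro h
  have hck := comp_singIdeal (A := A) k k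
  rw [h, comp_bot, if_pos rfl] at hck
  exact topNeBot hck.symm

lemma singIdeal_ne_top [∀ i, Nontrivial (A i)] (k k' : ι) (hk : k' ≠ k) :
    singIdeal (A := A) k ≠ ⊤ := by
  intro h
  have hck := comp_singIdeal (A := A) k k'
  rw [h, comp_top, if_neg hk] at hck
  exact topNeBot hck

/-- The vertex with support `{k}`. -/
noncomputable def singVert [∀ i, Nontrivial (A i)] (k k' : ι) (h : k' ≠ k) :
    NontrivialIdeal (∀ i, A i) :=
  ⟨singIdeal k, singIdeal_ne_bot k, singIdeal_ne_top k k' h⟩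

lemma supp_singVert [∀ i, Nontrivial (A i)] (k k' : ι) (h : k' ≠ k) :
    supp (singVert (A := A) k k' h).1 = {k} := by
  ext j
  rw [mem_supp]
  show comp (singIdeal k) j ≠ ⊥ ↔ j ∈ ({k} : Finset ι)
  rcases eq_or_ne j k with rfl | hj
  · rw [comp_singIdeal, if_pos rfl]
    exact iff_of_true topNeBot (Finset.mem_singleton_self j)
  · rw [comp_singIdeal, if_neg hj]
    exact iff_of_false (by simp) (by simp [hj])

end PiRing

end PIG

theorem statement18 (m n : ℕ) (hm : 1 ≤ m) (hn : 1 ≤ n)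
    (A : Fin m ⊕ Fin n → Type*) [∀ k, CommRing (A k)]
    (hart : ∀ i : Fin m, IsArtinianRing (A (Sum.inl i)))
    (hloc : ∀ i : Fin m, IsLocalRing (A (Sum.inl i)))
    (hpir : ∀ i : Fin m, IsPrincipalIdealRing (A (Sum.inl i)))
    (hnf : ∀ i : Fin m, ¬ IsField (A (Sum.inl i)))
    (hfield : ∀ j : Fin n, IsField (A (Sum.inr j)))
    (nn : Fin m → ℕ)
    (hfin : ∀ i, {K : Ideal (A (Sum.inl i)) | K ≠ ⊥ ∧ K ≠ ⊤}.Finite)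
    (hcard : ∀ i, {K : Ideal (A (Sum.inl i)) | K ≠ ⊥ ∧ K ≠ ⊤}.ncard = nn i) :
    IsLeast {k : ℕ | ∃ W : Set (NontrivialIdeal (∀ k, A k)), W.Finite ∧
        IsStrongResolvingSet (intersectionGraph (∀ k, A k)) W ∧ W.ncard = k}
      ((∏ i, (nn i + 2)) * 2 ^ n - 2 ^ (m + n - 1) - 2) := by
  classical
  -- Nontriviality of all components
  haveI hnontriv : ∀ k, Nontrivial (A k) := by
    rintro (i | j)
    · haveI := hloc i; infer_instance
    · exact ⟨(hfield j).exists_pair_ne⟩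
  haveI : Nontrivial (∀ k, A k) := by
    refine ⟨0, 1, fun h => ?_⟩
    have h0 := congrFun h (Sum.inl (⟨0, hm⟩ : Fin m))
    exact zero_ne_one h0
  -- All component ideal lattices are chains
  have hchain : ∀ k : Fin m ⊕ Fin n, ∀ P Q : Ideal (A k), P ≤ Q ∨ Q ≤ P := by
    rintro (i | j) P Q
    · haveI := hart i; haveI := hloc i; haveI := hpir i
      exact PIG.chain_of_local _ P Q
    · rcases PIG.field_ideal_cases (hfield j) P with rfl | rfl
      · exact Or.inl bot_le
      · exact Or.inr le_top
  -- Finiteness of the ideal lattices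
  have hfinIdeal : ∀ k, Finite (Ideal (A k)) := by
    rintro (i | j)
    · rw [← Set.finite_univ_iff]
      refine (((hfin i).union (Set.toFinite {⊥, ⊤}))).subset ?_
      intro K _
      by_cases h1 : K = ⊥
      · exact Or.inr (by simp [h1])
      by_cases h2 : K = ⊤
      · exact Or.inr (by simp [h2])
      · exact Or.inl ⟨h1, h2⟩
    · rw [← Set.finite_univ_iff]
      refine (Set.toFinite ({⊥, ⊤} : Set (Ideal (A (Sum.inr j))))).subset ?_
      intro K _
      rcases PIG.field_ideal_cases (hfield j) K with h | h <;> simp [h]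
  haveI hfinIdeal' : ∀ k, Finite (Ideal (A k)) := hfinIdeal
  haveI : Finite (∀ k, Ideal (A k)) := inferInstance
  haveI : Finite (Ideal (∀ k, A k)) := Finite.of_equiv _ PIG.idealEquiv.symm
  haveI : Finite (NontrivialIdeal (∀ k, A k)) := Subtype.finite
  -- cardinality of each component lattice
  have cardloc : ∀ i : Fin m, Nat.card (Ideal (A (Sum.inl i))) = nn i + 2 := by
    intro i
    have hU : (Set.univ : Set (Ideal (A (Sum.inl i)))) =
        {K | K ≠ ⊥ ∧ K ≠ ⊤} ∪ {⊥, ⊤} := by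
      ext K
      simp only [Set.mem_univ, true_iff, Set.mem_union, Set.mem_setOf_eq,
        Set.mem_insert_iff, Set.mem_singleton_iff]
      tauto
    have hdisj : Disjoint {K : Ideal (A (Sum.inl i)) | K ≠ ⊥ ∧ K ≠ ⊤} ({⊥, ⊤} : Set _) := by
      rw [Set.disjoint_left]
      rintro K ⟨h1, h2⟩ (rfl | rfl)
      · exact h1 rfl
      · exact h2 rfl
    have hbt : (⊥ : Ideal (A (Sum.inl i))) ≠ ⊤ := fun h => PIG.topNeBot h.symm
    calc Nat.card (Ideal (A (Sum.inl i)))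
        = (Set.univ : Set (Ideal (A (Sum.inl i)))).ncard := (Set.ncard_univ _).symm
      _ = ({K : Ideal (A (Sum.inl i)) | K ≠ ⊥ ∧ K ≠ ⊤} ∪ {⊥, ⊤}).ncard := by rw [hU]
      _ = {K : Ideal (A (Sum.inl i)) | K ≠ ⊥ ∧ K ≠ ⊤}.ncard + ({⊥, ⊤} : Set _).ncard :=
          Set.ncard_union_eq hdisj (hfin i) (Set.toFinite _)
      _ = nn i + 2 := by rw [hcard i, Set.ncard_pair hbt]
  have cardfld : ∀ j : Fin n, Nat.card (Ideal (A (Sum.inr j))) = 2 := fun j =>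
    PIG.card_ideal_of_isField (hfield j)
  -- total cardinalities
  have hP : Nat.card (Ideal (∀ k, A k)) = (∏ i, (nn i + 2)) * 2 ^ n := by
    rw [Nat.card_congr (PIG.idealEquiv (A := A)), Nat.card_pi, Fintype.prod_sum_type]
    congr 1
    · exact Finset.prod_congr rfl fun i _ => cardloc i
    · calc (∏ j : Fin n, Nat.card (Ideal (A (Sum.inr j))))
          = ∏ _j : Fin n, 2 := Finset.prod_congr rfl fun j _ => cardfld j
        _ = 2 ^ n := by simp
  have hcardV : Nat.card (NontrivialIdeal (∀ k, A k)) + 2 = (∏ i, (nn i + 2)) * 2 ^ n := by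
    rw [← hP]
    have hsum := Set.ncard_add_ncard_compl
      {I : Ideal (∀ k, A k) | I ≠ ⊥ ∧ I ≠ ⊤} (Set.toFinite _) (Set.toFinite _)
    have hcompl : {I : Ideal (∀ k, A k) | I ≠ ⊥ ∧ I ≠ ⊤}ᶜ = {⊥, ⊤} := by
      ext I
      simp only [Set.mem_compl_iff, Set.mem_setOf_eq, not_and_or, not_not,
        Set.mem_insert_iff, Set.mem_singleton_iff]
    have hbt : (⊥ : Ideal (∀ k, A k)) ≠ ⊤ := fun h => PIG.topNeBot h.symm
    rw [hcompl, Set.ncard_pair hbt] at hsum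
    have e1 : Nat.card (NontrivialIdeal (∀ k, A k)) =
        ({I : Ideal (∀ k, A k) | I ≠ ⊥ ∧ I ≠ ⊤}).ncard := Nat.card_coe_set_eq _
    have e2 : (Set.univ : Set (Ideal (∀ k, A k))).ncard = Nat.card (Ideal (∀ k, A k)) :=
      Set.ncard_univ _
    omega
  -- distinguished indices
  have hm0 : 0 < m := hm
  have hn0 : 0 < n := hn
  set k₀ : Fin m ⊕ Fin n := Sum.inl ⟨0, hm0⟩ with hk₀def
  set k₁ : Fin m ⊕ Fin n := Sum.inr ⟨0, hn0⟩ with hk₁def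
  have hk01 : k₁ ≠ k₀ := by simp [hk₀def, hk₁def]
  -- the maximal ideal at k₀
  haveI := hloc (⟨0, hm0⟩ : Fin m)
  set MI : Ideal (A k₀) := IsLocalRing.maximalIdeal (A k₀) with hMIdef
  have hMibot : MI ≠ ⊥ := fun h =>
    hnf (⟨0, hm0⟩ : Fin m) (IsLocalRing.isField_iff_maximalIdeal_eq.mpr h)
  have hMitop : MI ≠ ⊤ := (IsLocalRing.maximalIdeal.isMaximal _).ne_top
  -- the universal-support vertex
  set K : NontrivialIdeal (∀ k, A k) :=
    PIG.capVert k₀ MI hMibot hMitop Finset.univ (Finset.mem_univ k₀) with hKdef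
  have hKuniv : PIG.supp K.1 = Finset.univ :=
    PIG.supp_capVert k₀ MI hMibot hMitop Finset.univ (Finset.mem_univ k₀)
  -- the number of subsets containing k₀
  have hsub : Nat.card {S : Finset (Fin m ⊕ Fin n) // k₀ ∈ S} = 2 ^ (m + n - 1) := by
    rw [Nat.card_eq_fintype_card, Fintype.card_subtype]
    have hbij : (Finset.univ.filter fun S : Finset (Fin m ⊕ Fin n) => k₀ ∈ S).card
        = (Finset.univ.filter fun S : Finset (Fin m ⊕ Fin n) => ¬ k₀ ∈ S).card := by
      refine Finset.card_bij' (fun S _ => Sᶜ) (fun S _ => Sᶜ) ?_ ?_ ?_ ?_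
      · intro a ha
        simp only [Finset.mem_filter, Finset.mem_univ, true_and] at ha ⊢
        simp [ha]
      · intro a ha
        simp only [Finset.mem_filter, Finset.mem_univ, true_and] at ha ⊢
        simp [ha]
      · intro a _
        exact compl_compl a
      · intro a _
        exact compl_compl a
    have hsplit := Finset.card_filter_add_card_filter_not
      (s := (Finset.univ : Finset (Finset (Fin m ⊕ Fin n))))
      (fun S : Finset (Fin m ⊕ Fin n) => k₀ ∈ S)
    have hcardall : (Finset.univ : Finset (Finset (Fin m ⊕ Fin n))).card = 2 ^ (m + n) := by
      rw [Finset.card_univ, Fintype.card_finset]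
      congr 1
      simp
    have hpow : 2 ^ (m + n) = 2 * 2 ^ (m + n - 1) := by
      rw [← pow_succ']
      congr 1
      omega
    omega
  constructor
  · -- membership: construct a strong resolving set of the right size
    set aVfun : {S : Finset (Fin m ⊕ Fin n) // k₀ ∈ S} → NontrivialIdeal (∀ k, A k) :=
      fun S => PIG.capVert k₀ MI hMibot hMitop S.1 S.2 with haVdef
    have hsuppA : ∀ S, PIG.supp (aVfun S).1 = S.1 := fun S =>
      PIG.supp_capVert k₀ MI hMibot hMitop S.1 S.2
    have hinj : Function.Injective aVfun := by
      intro S S' h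
      apply Subtype.ext
      rw [← hsuppA S, ← hsuppA S', h]
    have hk₀mem : ∀ u, u ∈ Set.range aVfun → k₀ ∈ PIG.supp u.1 := by
      rintro u ⟨S, rfl⟩
      rw [hsuppA S]
      exact S.2
    refine ⟨(Set.range aVfun)ᶜ, Set.toFinite _, ?_, ?_⟩
    · -- strong resolving
      intro u v huv
      by_cases hu : u ∈ Set.range aVfun
      swap
      · exact ⟨u, hu, Or.inr (by rw [SimpleGraph.edist_self, zero_add])⟩
      by_cases hv : v ∈ Set.range aVfun
      swap
      · exact ⟨v, hv, Or.inl (by rw [SimpleGraph.edist_self, zero_add])⟩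
      obtain ⟨S, rfl⟩ := hu
      obtain ⟨S', rfl⟩ := hv
      have hSne : S.1 ≠ S'.1 := fun h => huv (congrArg aVfun (Subtype.ext h))
      have hvu1 : (intersectionGraph (∀ k, A k)).edist (aVfun S') (aVfun S) = 1 := by
        apply PIG.edist_eq_one hchain (Ne.symm huv)
        exact ⟨k₀, Finset.mem_inter.mpr ⟨by rw [hsuppA S']; exact S'.2,
          by rw [hsuppA S]; exact S.2⟩⟩
      have huv1 : (intersectionGraph (∀ k, A k)).edist (aVfun S) (aVfun S') = 1 := by
        apply PIG.edist_eq_one hchain huv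
        exact ⟨k₀, Finset.mem_inter.mpr ⟨by rw [hsuppA S]; exact S.2,
          by rw [hsuppA S']; exact S'.2⟩⟩
      have hdiff : (∃ kk, kk ∈ S'.1 ∧ kk ∉ S.1) ∨ (∃ kk, kk ∈ S.1 ∧ kk ∉ S'.1) := by
        by_contra hcon
        push_neg at hcon
        exact hSne (Finset.Subset.antisymm (fun kk hk => hcon.2 kk hk)
          (fun kk hk => hcon.1 kk hk))
      rcases hdiff with ⟨kk, hk1, hk2⟩ | ⟨kk, hk1, hk2⟩
      · -- kk ∈ S' \ S : the singleton vertex at kk is far from aVfun S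
        have hkk0 : k₀ ≠ kk := fun h => hk2 (h ▸ S.2)
        set w : NontrivialIdeal (∀ k, A k) := PIG.singVert kk k₀ hkk0 with hwdef
        have hsw : PIG.supp w.1 = {kk} := PIG.supp_singVert kk k₀ hkk0
        have hwW : w ∈ (Set.range aVfun)ᶜ := by
          intro hmem
          have := hk₀mem w hmem
          rw [hsw] at this
          exact hkk0 (Finset.mem_singleton.mp this)
        refine ⟨w, hwW, Or.inl ?_⟩
        have hwu2 : (intersectionGraph (∀ k, A k)).edist w (aVfun S) = 2 := by
          apply PIG.edist_eq_two hchain K hKuniv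
          · apply PIG.ne_of_supp_ne
            rw [hsw, hsuppA S]
            intro h
            exact hkk0 (Finset.mem_singleton.mp (by rw [h]; exact S.2))
          · rw [hsw, hsuppA S]
            exact Finset.singleton_inter_of_notMem hk2
        have hwv1 : (intersectionGraph (∀ k, A k)).edist w (aVfun S') = 1 := by
          apply PIG.edist_eq_one hchain
          · apply PIG.ne_of_supp_ne
            rw [hsw, hsuppA S']
            intro h
            exact hkk0 (Finset.mem_singleton.mp (by rw [h]; exact S'.2))
          · refine ⟨kk, Finset.mem_inter.mpr ⟨by simp [hsw], by rw [hsuppA S']; exact hk1⟩⟩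
        rw [hwu2, hwv1, hvu1]
        exact (one_add_one_eq_two).symm
      · -- kk ∈ S \ S'
        have hkk0 : k₀ ≠ kk := fun h => hk2 (h ▸ S'.2)
        set w : NontrivialIdeal (∀ k, A k) := PIG.singVert kk k₀ hkk0 with hwdef
        have hsw : PIG.supp w.1 = {kk} := PIG.supp_singVert kk k₀ hkk0
        have hwW : w ∈ (Set.range aVfun)ᶜ := by
          intro hmem
          have := hk₀mem w hmem
          rw [hsw] at this
          exact hkk0 (Finset.mem_singleton.mp this)
        refine ⟨w, hwW, Or.inr ?_⟩
        have hwv2 : (intersectionGraph (∀ k, A k)).edist w (aVfun S') = 2 := by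
          apply PIG.edist_eq_two hchain K hKuniv
          · apply PIG.ne_of_supp_ne
            rw [hsw, hsuppA S']
            intro h
            exact hkk0 (Finset.mem_singleton.mp (by rw [h]; exact S'.2))
          · rw [hsw, hsuppA S']
            exact Finset.singleton_inter_of_notMem hk2
        have hwu1 : (intersectionGraph (∀ k, A k)).edist w (aVfun S) = 1 := by
          apply PIG.edist_eq_one hchain
          · apply PIG.ne_of_supp_ne
            rw [hsw, hsuppA S]
            intro h
            exact hkk0 (Finset.mem_singleton.mp (by rw [h]; exact S.2))
          · refine ⟨kk, Finset.mem_inter.mpr ⟨by simp [hsw], by rw [hsuppA S]; exact hk1⟩⟩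
        rw [hwv2, hwu1, huv1]
        exact (one_add_one_eq_two).symm
    · -- cardinality of the constructed set
      have h1 := Set.ncard_add_ncard_compl (Set.range aVfun) (Set.toFinite _) (Set.toFinite _)
      have h2 : (Set.range aVfun).ncard = 2 ^ (m + n - 1) := by
        rw [← Nat.card_coe_set_eq, Nat.card_congr (Equiv.ofInjective aVfun hinj).symm,
          hsub]
      omega
  · -- lower bound
    rintro x ⟨Ws, hWfin, hWres, rfl⟩
    have hkey : ∀ u, u ∉ Ws → ∀ v, v ∉ Ws → u ≠ v →
        PIG.supp u.1 ≠ PIG.supp v.1 ∧ (PIG.supp u.1 ∩ PIG.supp v.1).Nonempty := by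
      intro u hu v hv huv
      obtain ⟨w, hw, hcase⟩ := hWres u v huv
      have hwu : w ≠ u := fun h => hu (h ▸ hw)
      have hwv : w ≠ v := fun h => hv (h ▸ hw)
      rcases hcase with h | h
      · obtain ⟨hint, kk, hkv, hku⟩ := PIG.resolve_aux hchain K hKuniv huv hwu hwv h
        exact ⟨fun he => hku (he ▸ hkv), hint⟩
      · obtain ⟨hint, kk, hku, hkv⟩ := PIG.resolve_aux hchain K hKuniv (Ne.symm huv) hwv hwu h
        refine ⟨fun he => hkv (he ▸ hku), ?_⟩
        rwa [Finset.inter_comm] at hint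
    set C : Set (NontrivialIdeal (∀ k, A k)) := Wsᶜ with hCdef
    have hCfin : C.Finite := Set.toFinite C
    have hinjOn : Set.InjOn (fun u : NontrivialIdeal (∀ k, A k) => PIG.supp u.1)
        hCfin.toFinset := by
      intro u hu v hv h
      by_contra hne
      have hu' : u ∉ Ws := by
        rw [Set.Finite.coe_toFinset] at hu
        exact hu
      have hv' : v ∉ Ws := by
        rw [Set.Finite.coe_toFinset] at hv
        exact hv
      exact (hkey u hu' v hv' hne).1 h
    set 𝒜 : Finset (Finset (Fin m ⊕ Fin n)) :=
      hCfin.toFinset.image (fun u => PIG.supp u.1) with h𝒜def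
    have hAcard : 𝒜.card = C.ncard := by
      rw [h𝒜def, Finset.card_image_of_injOn hinjOn, Set.ncard_eq_toFinset_card C hCfin]
    have hIntersecting : (↑𝒜 : Set (Finset (Fin m ⊕ Fin n))).Intersecting := by
      intro a ha b hb hdis
      simp only [h𝒜def, Finset.coe_image, Set.mem_image, Finset.mem_coe,
        Set.Finite.mem_toFinset] at ha hb
      obtain ⟨u, hu, rfl⟩ := ha
      obtain ⟨v, hv, rfl⟩ := hb
      rcases eq_or_ne u v with rfl | huv
      · obtain ⟨k, hk⟩ := PIG.supp_nonempty u
        exact Finset.not_disjoint_iff.mpr ⟨k, hk, hk⟩ hdis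
      · obtain ⟨-, k, hk⟩ := hkey u hu v hv huv
        rw [Finset.mem_inter] at hk
        exact Finset.not_disjoint_iff.mpr ⟨k, hk.1, hk.2⟩ hdis
    have hbound := hIntersecting.card_le
    rw [Fintype.card_finset] at hbound
    have hTcard : Fintype.card (Fin m ⊕ Fin n) = m + n := by simp
    rw [hTcard] at hbound
    have hpow : 2 ^ (m + n) = 2 * 2 ^ (m + n - 1) := by
      rw [← pow_succ']
      congr 1
      omega
    have hCle : C.ncard ≤ 2 ^ (m + n - 1) := by omega
    have hsum := Set.ncard_add_ncard_compl Ws (Set.toFinite _) (Set.toFinite _)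
    have hsum' : Ws.ncard + C.ncard = Nat.card (NontrivialIdeal (∀ k, A k)) := hsum
    set P : ℕ := (∏ i, (nn i + 2)) * 2 ^ n with hPdef
    omega
end
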